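/- arXiv:2412.10965 — 5 statements merged into one kernel-verified Lean document; each statement's English description precedes it below -/
import Mathlib

section
/- Let R be a semiperfect ring. If R is basic (i.e. a complete set of primitive orthogonal idempotents for R is also basic), then every nilpotent element of R lies in the Jacobson radical J(R). -/
universe u

open Function CategoryTheory

/-! ### Ring-theoretic preliminaries -/

/-- The Jacobson radical of a ring (the intersection of all maximal left ideals). -/
def jac (R : Type u) [Ring R] : Ideal R := Ideal.jacobson (⊥ : Ideal R)

section Modules

variable (R : Type u) [Ring R] (M : Type u) [AddCommGroup M] [Module R M]

/-- A submodule `N` of `M` is superfluous (small) if `N ⊔ L = M` implies `L = M`. -/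
def Superfluous (N : Submodule R M) : Prop :=
  ∀ L : Submodule R M, N ⊔ L = ⊤ → L = ⊤

/-- The submodule `I • p` generated by the products of elements of a left ideal `I`
with elements of a submodule `p`. -/
def idealSMul (I : Ideal R) (p : Submodule R M) : Submodule R M :=
  Submodule.span R {x | ∃ a ∈ I, ∃ m ∈ p, x = a • m}

/-- The powers `J(R)^n • M` of the radical acting on a module. -/
def radPow : ℕ → Submodule R M
  | 0 => ⊤
  | n + 1 => idealSMul R M (jac R) (radPow n)

/-- The Loewy length of a module: the least `n` with `J(R)^n M = 0` (`⊤` if none exists). -/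
noncomputable def loewyLength : ℕ∞ :=
  sInf ((↑) '' {n : ℕ | radPow R M n = ⊥})

/-- A projective cover: a linear surjection from a projective module with superfluous kernel. -/
def IsProjectiveCover {P : Type u} [AddCommGroup P] [Module R P]
    (f : P →ₗ[R] M) : Prop :=
  Module.Projective R P ∧ Function.Surjective f ∧ Superfluous R P (LinearMap.ker f)

/-- A module is indecomposable if it is non-zero and admits no non-trivial
direct sum decomposition. -/
def IsIndecomposableModule : Prop :=
  Nontrivial M ∧ ∀ N₁ N₂ : Submodule R M, IsCompl N₁ N₂ → N₁ = ⊥ ∨ N₂ = ⊥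

/-- A submodule is indecomposable if it is non-zero and is not the direct sum of two
non-zero submodules. -/
def IsIndecomposableSubmodule (N : Submodule R M) : Prop :=
  N ≠ ⊥ ∧ ∀ N₁ N₂ : Submodule R M, N₁ ≤ N → N₂ ≤ N → N₁ ⊓ N₂ = ⊥ → N₁ ⊔ N₂ = N →
    N₁ = ⊥ ∨ N₂ = ⊥

end Modules

section Rings

variable (R : Type u) [Ring R]

/-- A ring is semilocal if it is semisimple modulo its Jacobson radical. -/
def IsSemilocalRing : Prop :=
  IsSemisimpleModule R (R ⧸ jac R)

/-- A ring is semiperfect if it is semilocal and idempotents lift modulo the radical. -/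
def IsSemiperfectRing : Prop :=
  IsSemilocalRing R ∧
    ∀ x : R, x * x - x ∈ jac R → ∃ e : R, IsIdempotentElem e ∧ e - x ∈ jac R

/-- A subset `T` of a ring is left T-nilpotent if every sequence in `T` has a
vanishing initial product `a 0 * a 1 * ⋯ * a n`. -/
def IsLeftTNilpotent {R : Type u} [Ring R] (T : Set R) : Prop :=
  ∀ a : ℕ → R, (∀ i, a i ∈ T) → ∃ n : ℕ, ((List.range (n + 1)).map a).prod = 0

/-- A ring is left perfect if it is semilocal with left T-nilpotent radical. -/
def IsLeftPerfectRing : Prop :=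
  IsSemilocalRing R ∧ IsLeftTNilpotent (jac R : Set R)

/-- `I ^ n = 0`: every product of `n` elements of `I` vanishes. -/
def IdealPowZero (I : Ideal R) (n : ℕ) : Prop :=
  ∀ a : ℕ → R, (∀ i, a i ∈ I) → ((List.range n).map a).prod = 0

/-- A ring is semiprimary if it is semilocal and its Jacobson radical is nilpotent. -/
def IsSemiprimaryRing' : Prop :=
  IsSemilocalRing R ∧ ∃ n : ℕ, IdealPowZero R (jac R) n

/-- A primitive idempotent: a non-zero idempotent admitting no non-trivial
decomposition into orthogonal idempotents. -/
def IsPrimitiveIdem (e : R) : Prop :=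
  IsIdempotentElem e ∧ e ≠ 0 ∧
    ∀ f g : R, IsIdempotentElem f → IsIdempotentElem g → f * g = 0 → g * f = 0 →
      f + g = e → f = 0 ∨ g = 0

/-- A complete set of primitive orthogonal idempotents. -/
def IsCompleteOrthogonalPrimitiveSet {ι : Type u} [Fintype ι] (e : ι → R) : Prop :=
  (∀ i, IsPrimitiveIdem R (e i)) ∧ (∀ i j, i ≠ j → e i * e j = 0) ∧ ∑ i, e i = 1

/-- A complete set of primitive orthogonal idempotents is basic if the corresponding
indecomposable projective modules `R e i` are pairwise non-isomorphic. -/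
def IsBasicSet {ι : Type u} [Fintype ι] (e : ι → R) : Prop :=
  IsCompleteOrthogonalPrimitiveSet R e ∧
    ∀ i j, Nonempty ((Ideal.span {e i}) ≃ₗ[R] (Ideal.span {e j})) → i = j

/-- A ring is basic if it admits a complete set of primitive orthogonal idempotents
that is basic. -/
def IsBasicRing : Prop :=
  ∃ (ι : Type u) (_ : Fintype ι) (e : ι → R), IsBasicSet R e

end Rings

/-! ### Homological dimensions -/

section Dim

variable (A : Type u) [Ring A]

/-- `projDimLE A n M`: the `A`-module `M` admits a projective resolution of length `≤ n`. -/
def projDimLE : ℕ → ModuleCat.{u} A → Prop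
  | 0, M => Projective M
  | n + 1, M => ∃ (K P : ModuleCat.{u} A) (f : K ⟶ P) (g : P ⟶ M),
      Projective P ∧ Function.Injective f ∧ Function.Surjective g ∧
      (∀ x, g (f x) = 0) ∧ (∀ y, g y = 0 → ∃ x, f x = y) ∧ projDimLE n K

/-- The projective dimension of a module, as an extended natural number. -/
noncomputable def projDim (M : ModuleCat.{u} A) : ℕ∞ :=
  sInf ((↑) '' {n : ℕ | projDimLE A n M})

/-- `injDimLE A n M`: the `A`-module `M` admits an injective coresolution of length `≤ n`. -/
def injDimLE : ℕ → ModuleCat.{u} A → Prop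
  | 0, M => Injective M
  | n + 1, M => ∃ (I C : ModuleCat.{u} A) (f : M ⟶ I) (g : I ⟶ C),
      Injective I ∧ Function.Injective f ∧ Function.Surjective g ∧
      (∀ x, g (f x) = 0) ∧ (∀ y, g y = 0 → ∃ x, f x = y) ∧ injDimLE n C

/-- The injective dimension of a module, as an extended natural number. -/
noncomputable def injDim (M : ModuleCat.{u} A) : ℕ∞ :=
  sInf ((↑) '' {n : ℕ | injDimLE A n M})

/-- The left global dimension of a ring. -/
noncomputable def glDim : ℕ∞ :=
  ⨆ M : ModuleCat.{u} A, projDim A M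

/-- The little finitistic dimension: the supremum of the projective dimensions of
finitely generated left modules of finite projective dimension. -/
noncomputable def finDim : ℕ∞ :=
  ⨆ (M : ModuleCat.{u} A) (_ : Module.Finite A M ∧ projDim A M ≠ ⊤), projDim A M

/-- The big finitistic dimension: the supremum of the projective dimensions of
all left modules of finite projective dimension. -/
noncomputable def FinDim : ℕ∞ :=
  ⨆ (M : ModuleCat.{u} A) (_ : projDim A M ≠ ⊤), projDim A M

end Dim

/-! ### Induction along a ring homomorphism -/

section Tensor

variable {A B : Type u} [Ring A] [Ring B] (φ : A →+* B)

/-- The relations defining `B ⊗_A M` inside `B ⊗_ℤ M`. -/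
def TensorRel (M : Type u) [AddCommGroup M] [Module A M] :
    Submodule B (TensorProduct ℤ B M) :=
  Submodule.span B
    {x | ∃ (b : B) (a : A) (m : M), x = (b * φ a) ⊗ₜ[ℤ] m - b ⊗ₜ[ℤ] (a • m)}

/-- The induced module `B ⊗_A M` along a ring homomorphism `φ : A →+* B`, realized
as the quotient of `B ⊗_ℤ M` by the bilinearity relations for the `A`-actions. -/
def TensorB (M : Type u) [AddCommGroup M] [Module A M] : Type u :=
  TensorProduct ℤ B M ⧸ TensorRel φ M

noncomputable instance (M : Type u) [AddCommGroup M] [Module A M] :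
    AddCommGroup (TensorB φ M) :=
  inferInstanceAs (AddCommGroup (TensorProduct ℤ B M ⧸ TensorRel φ M))

noncomputable instance (M : Type u) [AddCommGroup M] [Module A M] :
    Module B (TensorB φ M) :=
  inferInstanceAs (Module B (TensorProduct ℤ B M ⧸ TensorRel φ M))

/-- The map induced on `B ⊗_ℤ ·` by an `A`-linear map `f`. -/
noncomputable def tmapAux {M N : Type u} [AddCommGroup M] [Module A M]
    [AddCommGroup N] [Module A N] (f : M →ₗ[A] N) :
    TensorProduct ℤ B M →ₗ[B] TensorProduct ℤ B N :=
  TensorProduct.AlgebraTensorModule.map (LinearMap.id : B →ₗ[B] B)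
    f.toAddMonoidHom.toIntLinearMap

/-- The induction functor on morphisms: `B ⊗_A f : B ⊗_A M →ₗ[B] B ⊗_A N`. -/
noncomputable def tmap {M N : Type u} [AddCommGroup M] [Module A M]
    [AddCommGroup N] [Module A N] (f : M →ₗ[A] N) :
    TensorB φ M →ₗ[B] TensorB φ N :=
  Submodule.mapQ (TensorRel φ M) (TensorRel φ N) (tmapAux (B := B) f) (by
    rw [TensorRel, Submodule.span_le]
    rintro x ⟨b, a, m, rfl⟩
    have : (tmapAux (B := B) f) ((b * φ a) ⊗ₜ[ℤ] m - b ⊗ₜ[ℤ] (a • m)) =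
        (b * φ a) ⊗ₜ[ℤ] (f m) - b ⊗ₜ[ℤ] (a • f m) := by
      simp [tmapAux, map_smul]
    rw [SetLike.mem_coe, Submodule.mem_comap, this]
    exact Submodule.subset_span ⟨b, a, f m, rfl⟩)

/-- `torVanish φ n M` encodes the vanishing `Tor_{n+1}^A(B, M) = 0`, via dimension
shifting through short exact sequences `0 → K → P → M → 0` with `P` projective. -/
def torVanish : ℕ → ModuleCat.{u} A → Prop
  | 0, M => ∀ (K P : ModuleCat.{u} A) (f : K ⟶ P) (g : P ⟶ M),
      Projective P → Function.Injective f → Function.Surjective g →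
      (∀ x, g (f x) = 0) → (∀ y, g y = 0 → ∃ x, f x = y) →
      Function.Injective (tmap φ (f.hom : ↥K →ₗ[A] ↥P))
  | n + 1, M => ∀ (K P : ModuleCat.{u} A) (f : K ⟶ P) (g : P ⟶ M),
      Projective P → Function.Injective f → Function.Surjective g →
      (∀ x, g (f x) = 0) → (∀ y, g y = 0 → ∃ x, f x = y) →
      torVanish n K

/-- The flat dimension of `B` as a right `A`-module along `φ`, characterized by Tor
vanishing: `flatdim B_A ≤ d` iff `Tor_n^A(B, M) = 0` for all `n > d` and all left
`A`-modules `M`. -/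
noncomputable def flatDimR : ℕ∞ :=
  sInf ((↑) '' {d : ℕ | ∀ (M : ModuleCat.{u} A) (n : ℕ), d ≤ n → torVanish φ n M})

/-- `B` as a right `A`-module (i.e. a left `Aᵐᵒᵖ`-module) via `φ`. -/
noncomputable def rightModule : Module Aᵐᵒᵖ B :=
  Module.compHom B (RingHom.op φ)

/-- The projective dimension of `B` as a right `A`-module via `φ`. -/
noncomputable def pdBA : ℕ∞ :=
  letI := rightModule φ
  projDim Aᵐᵒᵖ (ModuleCat.of Aᵐᵒᵖ B)

end Tensor


section aux
variable {R : Type u} [Ring R]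

lemma jac_mul_mem {x : R} (hx : x ∈ jac R) (y : R) : x * y ∈ jac R :=
  Ideal.mul_mem_right (I := Ideal.jacobson (⊥ : Ideal R)) y hx

lemma jac_left_inv {x : R} (hx : x ∈ jac R) : ∃ z : R, z * (1 + x) = 1 := by
  obtain ⟨z, hz⟩ := Ideal.mem_jacobson_iff.1 hx 1
  rw [Ideal.mem_bot, sub_eq_zero] at hz
  rw [mul_one] at hz
  exact ⟨z, by rw [mul_add, mul_one, add_comm]; exact hz⟩

lemma jac_unit {x : R} (hx : x ∈ jac R) : ∃ z : R, z * (1 + x) = 1 ∧ (1 + x) * z = 1 := by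
  obtain ⟨z, hz⟩ := jac_left_inv hx
  have hz1 : z - 1 ∈ jac R := by
    have h2 : z + z * x = 1 := by rw [mul_add, mul_one] at hz; exact hz
    have : z - 1 = -(z * x) := by
      rw [sub_eq_iff_eq_add, neg_add_eq_sub, eq_sub_iff_add_eq]
      exact h2
    rw [this]
    exact neg_mem (Submodule.smul_mem _ z hx)
  obtain ⟨w, hw⟩ := jac_left_inv hz1
  rw [add_sub_cancel] at hw
  refine ⟨z, hz, ?_⟩
  have : w = 1 + x := by
    calc w = w * (z * (1 + x)) := by rw [hz, mul_one]
    _ = (w * z) * (1 + x) := by rw [mul_assoc]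
    _ = 1 + x := by rw [hw, one_mul]
  rw [← this, hw]

lemma jac_small (L : Ideal R) (h : jac R ⊔ L = ⊤) : L = ⊤ := by
  by_contra hL
  obtain ⟨m, hm, hLm⟩ := Ideal.exists_le_maximal L hL
  have hjm : jac R ≤ m := sInf_le ⟨bot_le, hm⟩
  exact hm.ne_top (top_le_iff.1 (h ▸ sup_le hjm hLm))

lemma idem_jac_eq_zero {e : R} (he : IsIdempotentElem e) (h : e ∈ jac R) : e = 0 := by
  obtain ⟨z, hz1, hz2⟩ := jac_unit (neg_mem h)
  have h1 : (1 + -e) * z = 1 := hz2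
  have h2 : e * (1 + -e) = 0 := by
    simp only [mul_add, mul_one, mul_neg, he.eq]
    simp
  calc e = e * ((1 + -e) * z) := by rw [h1, mul_one]
  _ = (e * (1 + -e)) * z := by rw [mul_assoc]
  _ = 0 := by rw [h2, zero_mul]

end aux
section tau
variable {R : Type u} [Ring R]

variable (R) in
noncomputable def tauM (y : R) : (R ⧸ jac R) →ₗ[R] (R ⧸ jac R) :=
  Submodule.mapQ (jac R) (jac R) (LinearMap.toSpanSingleton R R y)
    (fun a ha => by
      simp only [Submodule.mem_comap, LinearMap.toSpanSingleton_apply, smul_eq_mul]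
      exact jac_mul_mem ha y)

lemma tauM_mk (y r : R) : tauM R y ((jac R).mkQ r) = (jac R).mkQ (r * y) := by
  simp [tauM, Submodule.mapQ_apply, LinearMap.toSpanSingleton_apply, smul_eq_mul]

lemma endo_eq_tau (f : (R ⧸ jac R) →ₗ[R] (R ⧸ jac R)) : ∃ y : R, f = tauM R y := by
  obtain ⟨y, hy⟩ := Submodule.mkQ_surjective (jac R) (f ((jac R).mkQ 1))
  refine ⟨y, LinearMap.ext fun m => ?_⟩
  obtain ⟨r, rfl⟩ := Submodule.mkQ_surjective (jac R) m
  have h1 : (jac R).mkQ r = r • (jac R).mkQ 1 := by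
    rw [← map_smul, smul_eq_mul, mul_one]
  rw [h1, map_smul, map_smul, ← hy, tauM_mk, one_mul, ← map_smul, smul_eq_mul]

lemma mem_spanI {e x : R} : x ∈ Ideal.span {e} ↔ ∃ r : R, r * e = x :=
  Ideal.mem_span_singleton'

variable (R) in
def Pmod (e : R) : Submodule R (R ⧸ jac R) := Submodule.map (jac R).mkQ (Ideal.span {e})

lemma tau_mem_P (e : R) (m : R ⧸ jac R) : tauM R e m ∈ Pmod R e := by
  obtain ⟨r, rfl⟩ := Submodule.mkQ_surjective (jac R) m
  rw [tauM_mk]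
  exact ⟨r * e, mem_spanI.2 ⟨r, rfl⟩, rfl⟩

lemma tau_idem_fix {e : R} (he : IsIdempotentElem e) {m : R ⧸ jac R} (hm : m ∈ Pmod R e) :
    tauM R e m = m := by
  obtain ⟨x, hx, rfl⟩ := hm
  obtain ⟨r, rfl⟩ := mem_spanI.1 hx
  rw [tauM_mk, mul_assoc, he.eq]

lemma small_ker {e : R} (he : IsIdempotentElem e)
    (Kk L : Submodule R ↥(Ideal.span {e} : Ideal R))
    (hK : Submodule.map (Submodule.subtype _) Kk ≤ jac R) (h : Kk ⊔ L = ⊤) : L = ⊤ := by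
  let E : Ideal R := Ideal.span {e}
  let L' : Ideal R := Submodule.map E.subtype L
  have h1 : E = Submodule.map E.subtype Kk ⊔ L' := by
    rw [← Submodule.map_sup, h, Submodule.map_subtype_top]
  have h2 : E ≤ jac R ⊔ L' := h1.le.trans (sup_le_sup_right hK _)
  have h3 : E ⊔ Ideal.span {1 - e} = ⊤ := by
    rw [Ideal.eq_top_iff_one]
    have h1e : e + (1 - e) = 1 := by abel
    have hmem : e + (1 - e) ∈ E ⊔ Ideal.span {1 - e} :=
      Submodule.add_mem_sup (Ideal.subset_span rfl) (Ideal.subset_span rfl)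
    rwa [h1e] at hmem
  have h4 : jac R ⊔ (L' ⊔ Ideal.span {1 - e}) = ⊤ := by
    rw [eq_top_iff, ← h3]
    exact sup_le (h2.trans (sup_le_sup_left le_sup_left _)) (le_sup_of_le_right le_sup_right)
  have h5 : L' ⊔ Ideal.span {1 - e} = ⊤ := jac_small _ h4
  have h7 : Ideal.span {1 - e} ⊓ E = ⊥ := by
    rw [eq_bot_iff]
    rintro x ⟨hx1, hx2⟩
    obtain ⟨r, hr⟩ := mem_spanI.1 hx1
    obtain ⟨s, hs⟩ := mem_spanI.1 hx2
    have hxe : x * e = x := by rw [← hs, mul_assoc, he.eq]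
    have hxe0 : x * e = 0 := by
      rw [← hr, mul_assoc, sub_mul, one_mul, he.eq, sub_self, mul_zero]
    rw [Submodule.mem_bot, ← hxe, hxe0]
  have h6 : L' = E := by
    have hle : L' ≤ E := Submodule.map_subtype_le _ _
    have : (L' ⊔ Ideal.span {1 - e}) ⊓ E = L' ⊔ (Ideal.span {1 - e} ⊓ E) :=
      sup_inf_assoc_of_le _ hle
    rw [h5, h7, sup_bot_eq, top_inf_eq] at this
    exact this.symm
  have := Submodule.map_injective_of_injective (Submodule.injective_subtype E)
    (show Submodule.map E.subtype L = Submodule.map E.subtype ⊤ by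
      rw [Submodule.map_subtype_top]; exact h6)
  exact this

end tau
section lift
variable {R : Type u} [Ring R]

lemma mkQ_eq_iff {a b : R} : (jac R).mkQ a = (jac R).mkQ b ↔ a - b ∈ jac R := by
  rw [Submodule.mkQ_apply, Submodule.mkQ_apply, Submodule.Quotient.eq]

lemma mkQ_eq_zero_iff {a : R} : (jac R).mkQ a = 0 ↔ a ∈ jac R := by
  rw [Submodule.mkQ_apply, Submodule.Quotient.mk_eq_zero]

lemma lift_under (hlift : ∀ x : R, x * x - x ∈ jac R → ∃ e : R, IsIdempotentElem e ∧ e - x ∈ jac R)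
    {e y : R} (he : IsIdempotentElem e)
    (hyy : y * y - y ∈ jac R) (hey : e * y - y ∈ jac R) (hye : y * e - y ∈ jac R) :
    ∃ g : R, IsIdempotentElem g ∧ g - y ∈ jac R ∧ e * g = g ∧ g * e = g := by
  obtain ⟨h, hh, hhy⟩ := hlift y hyy
  have hv1 : (1 + (e - 1) * h) - 1 ∈ jac R := by
    have h1 : (1 + (e - 1) * h) - 1 = (e - 1) * (h - y) + (e * y - y) := by noncomm_ring
    rw [h1]; exact add_mem (Ideal.mul_mem_left _ _ hhy) hey
  set v : R := 1 + (e - 1) * h with hvdef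
  have hvmem : v - 1 ∈ jac R := hv1
  obtain ⟨z, hz1, hz2⟩ := jac_unit (show (e - 1) * h ∈ jac R by
    have : (e - 1) * h = v - 1 := by rw [hvdef]; abel
    rw [this]; exact hvmem)
  rw [← hvdef] at hz1 hz2
  have hvh : v * h = e * h := by
    have h1 : v * h = h + (e - 1) * (h * h) := by rw [hvdef]; noncomm_ring
    rw [h1, hh.eq]; noncomm_ring
  have hz1' : z - 1 ∈ jac R := by
    have h1 : z - 1 = -(z * (v - 1)) := by
      have h2 : z + z * (v - 1) = 1 := by
        have h4 : z + z * (v - 1) = z * v := by noncomm_ring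
        rw [h4, hz1]
      have h3 : z * (v - 1) = 1 - z := eq_sub_of_add_eq' h2
      rw [h3, neg_sub]
    rw [h1]; exact neg_mem (Ideal.mul_mem_left _ _ hvmem)
  set f : R := v * h * z with hfdef
  have hef : e * f = f := by
    have h1 : e * (v * h) = v * h := by rw [hvh, ← mul_assoc, he.eq]
    rw [hfdef, ← mul_assoc, h1]
  have hff : IsIdempotentElem f := by
    unfold IsIdempotentElem
    have h1 : v * h * z * (v * h * z) = v * h * (z * v) * h * z := by noncomm_ring
    rw [hfdef, h1, hz1, mul_one, mul_assoc v h h, hh.eq]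
  have hfh : f - h ∈ jac R := by
    have h1 : f - h = (v - 1) * (h * z) + h * (z - 1) := by rw [hfdef]; noncomm_ring
    rw [h1]
    exact add_mem (jac_mul_mem hvmem _) (Ideal.mul_mem_left _ _ hz1')
  have hfy : f - y ∈ jac R := by
    have h1 : f - y = (f - h) + (h - y) := by abel
    rw [h1]; exact add_mem hfh hhy
  refine ⟨f * e, ?_, ?_, ?_, ?_⟩
  · unfold IsIdempotentElem
    have h1 : f * e * (f * e) = f * (e * f) * e := by noncomm_ring
    rw [h1, hef, hff.eq]
  · have h1 : f * e - y = (f - y) * e + (y * e - y) := by noncomm_ring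
    rw [h1]; exact add_mem (jac_mul_mem hfy _) hye
  · rw [← mul_assoc, hef]
  · rw [mul_assoc, he.eq]

end lift
section primsimple
variable {R : Type u} [Ring R]

lemma mkQ_e_mem_P (e : R) : (jac R).mkQ e ∈ Pmod R e :=
  ⟨e, Ideal.mem_span_singleton'.2 ⟨1, one_mul e⟩, rfl⟩

lemma Pmod_le_of_mem {e : R} {N : Submodule R (R ⧸ jac R)} (h : (jac R).mkQ e ∈ N) :
    Pmod R e ≤ N := by
  rintro _ ⟨x, hx, rfl⟩
  obtain ⟨r, rfl⟩ := Ideal.mem_span_singleton'.1 hx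
  have : (jac R).mkQ (r * e) = r • (jac R).mkQ e := by
    rw [← map_smul, smul_eq_mul]
  rw [this]
  exact N.smul_mem r h

lemma prim_simple (hss : IsSemisimpleModule R (R ⧸ jac R))
    (hlift : ∀ x : R, x * x - x ∈ jac R → ∃ e : R, IsIdempotentElem e ∧ e - x ∈ jac R)
    {e : R} (hp : IsPrimitiveIdem R e) : IsAtom (Pmod R e) := by
  obtain ⟨he, hne, hprim⟩ := hp
  constructor
  · intro hbot
    have h1 : (jac R).mkQ e = 0 := by
      have := mkQ_e_mem_P e
      rw [hbot] at this
      simpa using this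
    exact hne (idem_jac_eq_zero he (mkQ_eq_zero_iff.1 h1))
  · intro N hN
    by_contra hNbot
    letI := hss
    obtain ⟨N'i, hcompl⟩ := exists_isCompl (⟨N, hN.le⟩ : Set.Iic (Pmod R e))
    obtain ⟨N', hN'le⟩ := N'i
    have hsupNN' : N ⊔ N' = Pmod R e := by
      have := congrArg Subtype.val hcompl.sup_eq_top
      rwa [Set.Iic.coe_sup, Set.Iic.coe_top] at this
    have hinfNN' : N ⊓ N' = ⊥ := by
      have := congrArg Subtype.val hcompl.inf_eq_bot
      rwa [Set.Iic.coe_inf, Set.Iic.coe_bot] at this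
    have hN'bot : N' ≠ ⊥ := by
      intro hb
      rw [hb, sup_bot_eq] at hsupNN'
      exact hN.ne hsupNN'
    -- the kernel of tau e
    set K : Submodule R (R ⧸ jac R) := LinearMap.ker (tauM R e) with hKdef
    have htfix : ∀ m ∈ Pmod R e, tauM R e m = m := fun m hm => tau_idem_fix he hm
    have hPKinf : Pmod R e ⊓ K = ⊥ := by
      rw [eq_bot_iff]
      rintro m ⟨hm1, hm2⟩
      rw [Submodule.mem_bot, ← htfix m hm1]
      exact hm2
    have hPKsup : Pmod R e ⊔ K = ⊤ := by
      rw [eq_top_iff]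
      intro m _
      have h1 : m = tauM R e m + (m - tauM R e m) := by abel
      have h2 : m - tauM R e m ∈ K := by
        rw [hKdef, LinearMap.mem_ker, map_sub, htfix _ (tau_mem_P e m), sub_self]
      rw [h1]
      exact Submodule.add_mem_sup (tau_mem_P e m) h2
    have hcompl2 : IsCompl N (N' ⊔ K) := by
      constructor
      · rw [disjoint_iff]
        have h1 : (N' ⊔ K) ⊓ Pmod R e = N' := by
          rw [sup_inf_assoc_of_le _ hN'le, inf_comm K, hPKinf, sup_bot_eq]
        have h2 : N ⊓ (N' ⊔ K) = N ⊓ ((N' ⊔ K) ⊓ Pmod R e) := by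
          rw [inf_comm (N' ⊔ K) (Pmod R e), ← inf_assoc, inf_eq_left.2 hN.le]
        rw [h2, h1, hinfNN']
      · rw [codisjoint_iff, ← sup_assoc, hsupNN', hPKsup]
    set prA : (R ⧸ jac R) →ₗ[R] (R ⧸ jac R) :=
      N.subtype ∘ₗ Submodule.projectionOnto N (N' ⊔ K) hcompl2 with hprA
    have prop1 : ∀ m ∈ N, prA m = m := fun m hm => by
      rw [hprA]
      simp [Submodule.projectionOnto_apply_left hcompl2 ⟨m, hm⟩]
    have prop2 : ∀ m ∈ N' ⊔ K, prA m = 0 := fun m hm => by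
      rw [hprA]
      simp [Submodule.projectionOnto_apply_of_mem_right hcompl2 hm]
    have prop3 : ∀ m, prA m ∈ N := fun m => by
      rw [hprA]; exact Subtype.coe_prop _
    obtain ⟨y, hy⟩ := endo_eq_tau prA
    have hy1 : (jac R).mkQ y = prA ((jac R).mkQ 1) := by
      rw [hy, tauM_mk, one_mul]
    have hyN : (jac R).mkQ y ∈ N := hy1 ▸ prop3 _
    have hyy : y * y - y ∈ jac R := by
      rw [← mkQ_eq_iff]
      have h1 : (jac R).mkQ (y * y) = tauM R y ((jac R).mkQ y) := (tauM_mk y y).symm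
      rw [h1, ← hy, prop1 _ hyN]
    have hey : e * y - y ∈ jac R := by
      rw [← mkQ_eq_iff]
      have h1 : (jac R).mkQ (e * y) = tauM R y ((jac R).mkQ e) := (tauM_mk y e).symm
      have h2 : (jac R).mkQ 1 = (jac R).mkQ e + (jac R).mkQ (1 - e) := by
        rw [← map_add]; congr 1; abel
      have h3 : (jac R).mkQ (1 - e) ∈ K := by
        rw [hKdef, LinearMap.mem_ker, tauM_mk, sub_mul, one_mul, he.eq, sub_self, map_zero]
      have h4 : prA ((jac R).mkQ e) = (jac R).mkQ y := by
        rw [hy1, h2, map_add, prop2 _ (le_sup_right (a := N') h3), add_zero]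
      rw [h1, ← hy, h4]
    have hye : y * e - y ∈ jac R := by
      rw [← mkQ_eq_iff]
      have h1 : (jac R).mkQ (y * e) = tauM R e ((jac R).mkQ y) := (tauM_mk e y).symm
      rw [h1, htfix _ (hN.le hyN)]
    obtain ⟨g, hg, hgy, heg, hge⟩ := lift_under hlift he hyy hey hye
    have hg' : IsIdempotentElem (e - g) := by
      unfold IsIdempotentElem
      have h1 : (e - g) * (e - g) = e * e - e * g - g * e + g * g := by noncomm_ring
      rw [h1, he.eq, heg, hge, hg.eq]
      abel
    have horth1 : g * (e - g) = 0 := by rw [mul_sub, hge, hg.eq, sub_self]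
    have horth2 : (e - g) * g = 0 := by rw [sub_mul, heg, hg.eq, sub_self]
    have hsum : g + (e - g) = e := by abel
    rcases hprim g (e - g) hg hg' horth1 horth2 hsum with h0 | h0
    · -- g = 0 ⇒ y ∈ jac ⇒ prA (mkQ 1) = 0 ⇒ N = ⊥
      have hyjac : y ∈ jac R := by
        have := hgy
        rw [h0, zero_sub] at this
        simpa using neg_mem this
      have hmkQy : (jac R).mkQ y = 0 := mkQ_eq_zero_iff.2 hyjac
      obtain ⟨n, hnN, hn0⟩ := N.ne_bot_iff.1 hNbot
      obtain ⟨r, rfl⟩ := Submodule.mkQ_surjective (jac R) n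
      have : prA ((jac R).mkQ r) = 0 := by
        rw [hy, tauM_mk]
        have : (jac R).mkQ (r * y) = r • (jac R).mkQ y := by rw [← map_smul, smul_eq_mul]
        rw [this, hmkQy, smul_zero]
      rw [prop1 _ hnN] at this
      exact hn0 this
    · -- e = g ⇒ mkQ e ∈ N ⇒ Pmod ≤ N ⇒ N' = ⊥
      have hegy : e - y ∈ jac R := by
        have h1 : e - g = 0 := h0
        have h2 : e = g := by rw [sub_eq_zero] at h1; exact h1
        rw [h2]; exact hgy
      have hmkQe : (jac R).mkQ e = (jac R).mkQ y := mkQ_eq_iff.2 hegy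
      have hPN : Pmod R e ≤ N := Pmod_le_of_mem (hmkQe ▸ hyN)
      have : N' = ⊥ := by
        rw [eq_bot_iff, ← hinfNN']
        exact le_inf (hN'le.trans hPN) le_rfl
      exact hN'bot this
end primsimple
section cover
variable {R : Type u} [Ring R]

/-- The canonical map `Re → P_e`. -/
noncomputable def rhoE (e : R) : ↥(Ideal.span {e} : Ideal R) →ₗ[R] ↥(Pmod R e) :=
  LinearMap.codRestrict (Pmod R e) ((jac R).mkQ ∘ₗ (Ideal.span {e} : Ideal R).subtype)
    (fun x => Submodule.mem_map_of_mem x.2)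

lemma rhoE_apply (e : R) (x : ↥(Ideal.span {e} : Ideal R)) :
    (rhoE e x : R ⧸ jac R) = (jac R).mkQ x.1 := rfl

lemma rhoE_surjective (e : R) : Function.Surjective (rhoE e) := by
  rintro ⟨v, u, hu, rfl⟩
  exact ⟨⟨u, hu⟩, rfl⟩

/-- deduce an iso of principal left ideals from an iso of their tops -/
lemma cover_iso {e f : R} (he : IsIdempotentElem e) (hf : IsIdempotentElem f)
    (σ : ↥(Pmod R e) ≃ₗ[R] ↥(Pmod R f)) :
    Nonempty (↥(Ideal.span {e} : Ideal R) ≃ₗ[R] ↥(Ideal.span {f} : Ideal R)) := by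
  classical
  set ve : ↥(Pmod R e) := ⟨(jac R).mkQ e, mkQ_e_mem_P e⟩ with hve
  set p : ↥(Pmod R f) := σ ve with hp
  obtain ⟨u, hu, hu2⟩ := p.2
  set w : R := e * u with hwdef
  have hw : w ∈ (Ideal.span {f} : Ideal R) := Ideal.mul_mem_left _ e hu
  have hew : e * w = w := by rw [hwdef, ← mul_assoc, he.eq]
  have hsve : e • ve = ve := by
    apply Subtype.ext
    show e • ((jac R).mkQ e) = (jac R).mkQ e
    rw [← map_smul, smul_eq_mul, he.eq]
  have hep : e • p = p := by rw [hp, ← map_smul, hsve]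
  have hmkw : (jac R).mkQ w = (p : R ⧸ jac R) := by
    have h1 : (jac R).mkQ w = e • (jac R).mkQ u := by
      rw [← map_smul, smul_eq_mul, hwdef]
    rw [h1, hu2, ← Submodule.coe_smul, hep]
  -- θ : Re → Rf, x ↦ x * w
  set θ : ↥(Ideal.span {e} : Ideal R) →ₗ[R] ↥(Ideal.span {f} : Ideal R) :=
    { toFun := fun x => ⟨x.1 * w, Ideal.mul_mem_left _ x.1 hw⟩
      map_add' := fun a b => Subtype.ext (add_mul a.1 b.1 w)
      map_smul' := fun r a => Subtype.ext (by
        show (r • a.1) * w = r • (a.1 * w)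
        rw [smul_eq_mul, smul_eq_mul, mul_assoc]) } with hθ
  have hcomm : ∀ x : ↥(Ideal.span {e} : Ideal R),
      (jac R).mkQ ((θ x : R)) = ((σ (rhoE e x) : R ⧸ jac R)) := by
    intro x
    obtain ⟨r, hr⟩ := Ideal.mem_span_singleton'.1 x.2
    have h1 : (θ x : R) = r • w := by
      show x.1 * w = r • w
      rw [← hr, smul_eq_mul, mul_assoc, hew]
    have h2 : rhoE e x = r • ve := by
      apply Subtype.ext
      rw [rhoE_apply, ← hr]
      show (jac R).mkQ (r * e) = r • ((jac R).mkQ e)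
      rw [← map_smul, smul_eq_mul]
    rw [h1, h2, map_smul, map_smul, hmkw, ← Submodule.coe_smul, ← hp]
  -- surjectivity of θ
  set piF : ↥(Ideal.span {f} : Ideal R) →ₗ[R] (R ⧸ jac R) :=
    (jac R).mkQ ∘ₗ (Ideal.span {f} : Ideal R).subtype with hpiF
  have hKle : Submodule.map (Ideal.span {f} : Ideal R).subtype (LinearMap.ker piF) ≤ jac R := by
    rintro _ ⟨x, hx, rfl⟩
    have h0 : piF x = 0 := hx
    exact mkQ_eq_zero_iff.1 h0
  have hsup : LinearMap.ker piF ⊔ LinearMap.range θ = ⊤ := by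
    rw [eq_top_iff]
    intro v _
    obtain ⟨q, hq⟩ := rhoE_surjective e (σ.symm ⟨(jac R).mkQ v.1, Submodule.mem_map_of_mem v.2⟩)
    have h1 : (jac R).mkQ ((θ q : R)) = (jac R).mkQ v.1 := by
      rw [hcomm q, hq]
      simp
    have h2 : v - θ q ∈ LinearMap.ker piF := by
      rw [LinearMap.mem_ker, hpiF]
      show (jac R).mkQ ((v - θ q : _) : R) = 0
      rw [Submodule.coe_sub, map_sub, h1, sub_self]
    have h3 : v = (v - θ q) + θ q := by abel
    rw [h3]
    exact Submodule.add_mem_sup h2 (LinearMap.mem_range_self θ q)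
  have hrangeθ : LinearMap.range θ = ⊤ := small_ker hf _ _ hKle hsup
  have hsurjθ : Function.Surjective θ := LinearMap.range_eq_top.1 hrangeθ
  -- splitting
  obtain ⟨v0, hv0⟩ := hsurjθ ⟨f, Ideal.mem_span_singleton'.2 ⟨1, one_mul f⟩⟩
  set v' : ↥(Ideal.span {e} : Ideal R) := f • v0 with hv'
  have hθv' : θ v' = ⟨f, Ideal.mem_span_singleton'.2 ⟨1, one_mul f⟩⟩ := by
    rw [hv', map_smul, hv0]
    apply Subtype.ext
    show f • f = f
    rw [smul_eq_mul, hf.eq]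
  set ψ : ↥(Ideal.span {f} : Ideal R) →ₗ[R] ↥(Ideal.span {e} : Ideal R) :=
    { toFun := fun x => x.1 • v'
      map_add' := fun a b => by
        show ((a + b : _) : R) • v' = a.1 • v' + b.1 • v'
        rw [Submodule.coe_add, add_smul]
      map_smul' := fun r a => by
        show ((r • a : _) : R) • v' = r • (a.1 • v')
        rw [Submodule.coe_smul, smul_eq_mul, mul_smul] } with hψ
  have hθψ : ∀ x, θ (ψ x) = x := by
    intro x
    obtain ⟨r, hr⟩ := Ideal.mem_span_singleton'.1 x.2
    show θ (x.1 • v') = x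
    rw [map_smul, hθv']
    apply Subtype.ext
    show x.1 • f = x.1
    rw [smul_eq_mul, ← hr, mul_assoc, hf.eq]
  have hkerθ : Submodule.map (Ideal.span {e} : Ideal R).subtype (LinearMap.ker θ) ≤ jac R := by
    rintro _ ⟨x, hx0, rfl⟩
    have hx : θ x = 0 := hx0
    have h1 : (jac R).mkQ x.1 = 0 := by
      have h2 : σ (rhoE e x) = 0 := by
        apply Subtype.ext
        rw [← hcomm x, hx]
        rfl
      have h3 : rhoE e x = 0 := by
        apply σ.injective
        rw [h2, map_zero]
      have h4 := congrArg (Subtype.val) h3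
      rwa [rhoE_apply] at h4
    exact mkQ_eq_zero_iff.1 h1
  have hsup2 : LinearMap.ker θ ⊔ LinearMap.range ψ = ⊤ := by
    rw [eq_top_iff]
    intro x _
    have h1 : θ (x - ψ (θ x)) = 0 := by
      rw [map_sub, hθψ, sub_self]
    have h2 : x = (x - ψ (θ x)) + ψ (θ x) := by abel
    rw [h2]
    exact Submodule.add_mem_sup (LinearMap.mem_ker.2 h1) (LinearMap.mem_range_self ψ _)
  have hrangeψ : LinearMap.range ψ = ⊤ := small_ker he _ _ hkerθ hsup2
  have hsurjψ : Function.Surjective ψ := LinearMap.range_eq_top.1 hrangeψ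
  have hinjθ : Function.Injective θ := by
    intro a b hab
    obtain ⟨a', rfl⟩ := hsurjψ a
    obtain ⟨b', rfl⟩ := hsurjψ b
    rw [hθψ a', hθψ b'] at hab
    rw [hab]
  exact ⟨LinearEquiv.ofBijective θ ⟨hinjθ, hsurjθ⟩⟩
end cover

/-- If a semiperfect ring is basic, then every nilpotent element
lies in the Jacobson radical. -/
theorem statement_0 (R : Type u) [Ring R] (hsp : IsSemiperfectRing R)
    (hb : IsBasicRing R) : ∀ x : R, IsNilpotent x → x ∈ jac R := by
  classical
  obtain ⟨hss, hlift⟩ := hsp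
  obtain ⟨ι, hfin, e, ⟨⟨hprim, horth, hsum⟩, hbasic⟩⟩ := hb
  letI := hfin
  intro x hx
  by_contra hxJ
  obtain ⟨n, hn⟩ := hx
  have hex : ∃ k, x ^ k ∈ jac R := ⟨n, by rw [hn]; exact zero_mem _⟩
  set m := Nat.find hex with hmdef
  have hmmem : x ^ m ∈ jac R := Nat.find_spec hex
  have hm0 : m ≠ 0 := by
    intro h0
    rw [h0, pow_zero] at hmmem
    have : x * 1 ∈ jac R := Ideal.mul_mem_left _ x hmmem
    rw [mul_one] at this
    exact hxJ this
  have hm1 : m ≠ 1 := by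
    intro h1
    rw [h1, pow_one] at hmmem
    exact hxJ hmmem
  have hm2 : 2 ≤ m := by omega
  set c := x ^ (m - 1) with hcdef
  have hc : c ∉ jac R := Nat.find_min hex (by omega)
  have hcc : c * c ∈ jac R := by
    have h1 : c * c = x ^ (m - 2) * x ^ m := by
      rw [hcdef, ← pow_add, ← pow_add]
      congr 1
      omega
    rw [h1]
    exact Ideal.mul_mem_left _ _ hmmem
  set φ := tauM R c with hφdef
  have hφ1 : φ ((jac R).mkQ 1) ≠ 0 := by
    rw [hφdef, tauM_mk, one_mul]
    intro h
    exact hc (mkQ_eq_zero_iff.1 h)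
  have hφφ : ∀ mm : R ⧸ jac R, φ (φ mm) = 0 := by
    intro mm
    obtain ⟨r, rfl⟩ := Submodule.mkQ_surjective (jac R) mm
    rw [hφdef, tauM_mk, tauM_mk, mul_assoc]
    exact mkQ_eq_zero_iff.2 (Ideal.mul_mem_left _ _ hcc)
  have hei : ∀ i, IsIdempotentElem (e i) := fun i => (hprim i).1
  have hatom : ∀ i, IsAtom (Pmod R (e i)) := fun i => prim_simple hss hlift (hprim i)
  have hsumtau : ∀ mm : R ⧸ jac R, ∑ i, tauM R (e i) mm = mm := by
    intro mm
    obtain ⟨r, rfl⟩ := Submodule.mkQ_surjective (jac R) mm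
    have h1 : ∀ i, tauM R (e i) ((jac R).mkQ r) = (jac R).mkQ (r * e i) :=
      fun i => tauM_mk _ _
    calc ∑ i, tauM R (e i) ((jac R).mkQ r) = ∑ i, (jac R).mkQ (r * e i) := by
          exact Finset.sum_congr rfl (fun i _ => h1 i)
    _ = (jac R).mkQ (∑ i, r * e i) := (map_sum _ _ _).symm
    _ = (jac R).mkQ r := by rw [← Finset.mul_sum, hsum, mul_one]
  -- no homs between distinct P i
  have hij : ∀ i j, i ≠ j → ∀ mm ∈ Pmod R (e i), tauM R (e j) (φ mm) = 0 := by
    intro i j hne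
    by_contra hcon
    push_neg at hcon
    obtain ⟨m₀, hm₀, hv⟩ := hcon
    set g : ↥(Pmod R (e i)) →ₗ[R] ↥(Pmod R (e j)) :=
      LinearMap.codRestrict (Pmod R (e j))
        ((tauM R (e j)) ∘ₗ φ ∘ₗ (Pmod R (e i)).subtype)
        (fun x => tau_mem_P _ _) with hgdef
    have hg0 : g ⟨m₀, hm₀⟩ ≠ 0 := by
      intro h
      apply hv
      have := congrArg Subtype.val h
      exact this
    -- injectivity
    have hker : ∀ a, g a = 0 → a = 0 := by
      intro a ha
      by_cases hK : Submodule.map (Pmod R (e i)).subtype (LinearMap.ker g) = Pmod R (e i)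
      · exfalso
        apply hg0
        have : (⟨m₀, hm₀⟩ : ↥(Pmod R (e i))).1 ∈
            Submodule.map (Pmod R (e i)).subtype (LinearMap.ker g) := by rw [hK]; exact hm₀
        obtain ⟨y, hy, hyv⟩ := this
        have : y = ⟨m₀, hm₀⟩ := Subtype.ext hyv
        rw [← this]
        exact hy
      · have hlt : Submodule.map (Pmod R (e i)).subtype (LinearMap.ker g) < Pmod R (e i) :=
          lt_of_le_of_ne (Submodule.map_subtype_le _ _) hK
        have hbot := (hatom i).2 _ hlt
        have : a.1 ∈ Submodule.map (Pmod R (e i)).subtype (LinearMap.ker g) :=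
          ⟨a, ha, rfl⟩
        rw [hbot, Submodule.mem_bot] at this
        exact Subtype.ext this
    have hinj : Function.Injective g := by
      intro a b h
      have := hker (a - b) (by rw [map_sub, h, sub_self])
      rwa [sub_eq_zero] at this
    -- surjectivity
    have hsurj : Function.Surjective g := by
      have hRm : Submodule.map (Pmod R (e j)).subtype (LinearMap.range g) = Pmod R (e j) := by
        by_contra hK
        have hlt : Submodule.map (Pmod R (e j)).subtype (LinearMap.range g) < Pmod R (e j) :=
          lt_of_le_of_ne (Submodule.map_subtype_le _ _) hK
        have hbot := (hatom j).2 _ hlt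
        apply hg0
        have : (g ⟨m₀, hm₀⟩).1 ∈ Submodule.map (Pmod R (e j)).subtype (LinearMap.range g) :=
          ⟨g ⟨m₀, hm₀⟩, LinearMap.mem_range_self _ _, rfl⟩
        rw [hbot, Submodule.mem_bot] at this
        exact Subtype.ext this
      intro v
      have : v.1 ∈ Submodule.map (Pmod R (e j)).subtype (LinearMap.range g) := by
        rw [hRm]; exact v.2
      obtain ⟨y, ⟨a, ha⟩, hyv⟩ := this
      exact ⟨a, by rw [ha]; exact Subtype.ext hyv⟩
    exact hne (hbasic i j (cover_iso (hei i) (hei j) (LinearEquiv.ofBijective g ⟨hinj, hsurj⟩)))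
  -- φ vanishes on each P i
  have hdecomp : ∀ i, ∀ mm ∈ Pmod R (e i), φ mm = tauM R (e i) (φ mm) := by
    intro i mm hmm
    have h1 : ∑ j, tauM R (e j) (φ mm) = φ mm := hsumtau (φ mm)
    have h2 : ∑ j, tauM R (e j) (φ mm) = tauM R (e i) (φ mm) := by
      apply Finset.sum_eq_single_of_mem i (Finset.mem_univ i)
      intro j _ hjne
      exact hij i j (fun h => hjne (h ▸ rfl)) mm hmm
    exact h1.symm.trans h2
  have hvanish : ∀ i, ∀ mm ∈ Pmod R (e i), φ mm = 0 := by
    intro i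
    set gii : ↥(Pmod R (e i)) →ₗ[R] ↥(Pmod R (e i)) :=
      LinearMap.codRestrict (Pmod R (e i))
        ((tauM R (e i)) ∘ₗ φ ∘ₗ (Pmod R (e i)).subtype)
        (fun x => tau_mem_P _ _) with hgiidef
    have hgval : ∀ x : ↥(Pmod R (e i)), (gii x : R ⧸ jac R) = φ x.1 := by
      intro x
      have : (gii x : R ⧸ jac R) = tauM R (e i) (φ x.1) := rfl
      rw [this, ← hdecomp i x.1 x.2]
    have hgg : ∀ x, gii (gii x) = 0 := by
      intro x
      apply Subtype.ext
      rw [hgval, hgval, hφφ]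
      rfl
    have hgzero : ∀ x, gii x = 0 := by
      by_cases hK : Submodule.map (Pmod R (e i)).subtype (LinearMap.ker gii) = Pmod R (e i)
      · intro x
        have : x.1 ∈ Submodule.map (Pmod R (e i)).subtype (LinearMap.ker gii) := by
          rw [hK]; exact x.2
        obtain ⟨y, hy, hyv⟩ := this
        have : y = x := Subtype.ext hyv
        rw [← this]; exact hy
      · exfalso
        have hlt : Submodule.map (Pmod R (e i)).subtype (LinearMap.ker gii) < Pmod R (e i) :=
          lt_of_le_of_ne (Submodule.map_subtype_le _ _) hK
        have hbot := (hatom i).2 _ hlt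
        have hker : ∀ a, gii a = 0 → a = 0 := by
          intro a ha
          have : a.1 ∈ Submodule.map (Pmod R (e i)).subtype (LinearMap.ker gii) := ⟨a, ha, rfl⟩
          rw [hbot, Submodule.mem_bot] at this
          exact Subtype.ext this
        have hallzero : ∀ a : ↥(Pmod R (e i)), a = 0 := fun a => hker a (hker _ (hgg a))
        apply (hatom i).1
        rw [eq_bot_iff]
        intro mm hmm
        have := hallzero ⟨mm, hmm⟩
        have := congrArg Subtype.val this
        exact this
    intro mm hmm
    have := congrArg Subtype.val (hgzero ⟨mm, hmm⟩)
    rw [hgval] at this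
    exact this
  -- conclude
  apply hφ1
  have h1 : (jac R).mkQ 1 = ∑ i, (jac R).mkQ (e i) := by
    rw [← map_sum, hsum]
  rw [h1, map_sum]
  apply Finset.sum_eq_zero
  intro i _
  exact hvanish i _ (mkQ_e_mem_P (e i))
end

section
/- Let R be a semiperfect ring whose Jacobson radical is nil. Then R is basic if and only if the Jacobson radical J(R) equals the set N(R) of nilpotent elements of R. -/
universe u

open Function CategoryTheory

/-! ### Auxiliary lemmas for Statement 1 -/

namespace Statement1Aux

section LemmaA
variable {R : Type u} [Ring R]

/-- Elements of `span {e}` absorb `e` on the right, for idempotent `e`. -/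
theorem mem_span_mul_self {e : R} (he : IsIdempotentElem e) {x : R}
    (hx : x ∈ Ideal.span ({e} : Set R)) : x * e = x := by
  obtain ⟨c, rfl⟩ := Submodule.mem_span_singleton.mp hx
  simp only [smul_eq_mul, mul_assoc, he.eq]

/-- From an isomorphism of principal left ideals, extract `a, b` with `a*b = e`, `b*a = f`. -/
theorem rel_of_iso {e f : R} (he : IsIdempotentElem e) (hf : IsIdempotentElem f)
    (φ : (Ideal.span ({e} : Set R)) ≃ₗ[R] (Ideal.span ({f} : Set R))) :
    ∃ a b : R, a * b = e ∧ b * a = f := by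
  set E : Ideal.span ({e} : Set R) := ⟨e, Submodule.mem_span_singleton_self e⟩ with hE
  set F : Ideal.span ({f} : Set R) := ⟨f, Submodule.mem_span_singleton_self f⟩ with hF
  set a : R := (φ E).1 with ha
  set b : R := (φ.symm F).1 with hb
  have haf : a * f = a := mem_span_mul_self hf (φ E).2
  have hbe : b * e = b := mem_span_mul_self he (φ.symm F).2
  -- φ E = a • F
  have h1 : φ E = a • F := by
    apply Subtype.ext
    simp only [SetLike.val_smul, smul_eq_mul, haf, ha]
    exact haf.symm
  have h2 : φ.symm F = b • E := by
    apply Subtype.ext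
    simp only [SetLike.val_smul, smul_eq_mul, hbe, hb]
    exact hbe.symm
  refine ⟨a, b, ?_, ?_⟩
  · have := φ.symm_apply_apply E
    rw [h1, map_smul, h2] at this
    have := congrArg Subtype.val this
    rw [hE] at this
    simp only [smul_eq_mul, SetLike.val_smul, Subtype.ext_iff] at this
    rwa [← mul_assoc, mul_assoc, hbe] at this
  · have := φ.apply_symm_apply F
    rw [h2, map_smul, h1] at this
    have := congrArg Subtype.val this
    rw [hF] at this
    simp only [smul_eq_mul, SetLike.val_smul, Subtype.ext_iff] at this
    rwa [← mul_assoc, mul_assoc, haf] at this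

/-- From `a, b` with `a*b = e`, `b*a = f`, build an isomorphism of principal left ideals. -/
theorem iso_of_rel {e f a b : R} (he : IsIdempotentElem e) (hf : IsIdempotentElem f)
    (hab : a * b = e) (hba : b * a = f) :
    Nonempty ((Ideal.span ({e} : Set R)) ≃ₗ[R] (Ideal.span ({f} : Set R))) := by
  subst hab; subst hba
  have h1 : ∀ x : R, a * (b * (a * (b * x))) = a * (b * x) := fun x => by
    have := congrArg (· * x) he.eq
    simpa only [mul_assoc] using this
  have h1' : a * (b * (a * b)) = a * b := by simpa only [mul_assoc] using he.eq
  have h2 : ∀ x : R, b * (a * (b * (a * x))) = b * (a * x) := fun x => by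
    have := congrArg (· * x) hf.eq
    simpa only [mul_assoc] using this
  have h2' : b * (a * (b * a)) = b * a := by simpa only [mul_assoc] using hf.eq
  have hab' : ((a * b) * a * (b * a)) * ((b * a) * b * (a * b)) = a * b := by
    simp only [mul_assoc, h1, h1']
  have hba' : ((b * a) * b * (a * b)) * ((a * b) * a * (b * a)) = b * a := by
    simp only [mul_assoc, h2, h2']
  have hmemf : ∀ x : R, x * ((a * b) * a * (b * a)) ∈ Ideal.span ({b * a} : Set R) := fun x => by
    have hx : x * ((a * b) * a * (b * a)) = (x * ((a * b) * a)) • (b * a) := by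
      simp only [smul_eq_mul, mul_assoc]
    rw [hx]
    exact Submodule.smul_mem _ _ (Submodule.mem_span_singleton_self _)
  have hmeme : ∀ x : R, x * ((b * a) * b * (a * b)) ∈ Ideal.span ({a * b} : Set R) := fun x => by
    have hx : x * ((b * a) * b * (a * b)) = (x * ((b * a) * b)) • (a * b) := by
      simp only [smul_eq_mul, mul_assoc]
    rw [hx]
    exact Submodule.smul_mem _ _ (Submodule.mem_span_singleton_self _)
  refine ⟨LinearEquiv.ofLinear
    { toFun := fun x => ⟨x.1 * ((a * b) * a * (b * a)), hmemf x.1⟩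
      map_add' := fun x y => by apply Subtype.ext; simp [add_mul]
      map_smul' := fun r x => by apply Subtype.ext; simp [mul_assoc] }
    { toFun := fun y => ⟨y.1 * ((b * a) * b * (a * b)), hmeme y.1⟩
      map_add' := fun x y => by apply Subtype.ext; simp [add_mul]
      map_smul' := fun r x => by apply Subtype.ext; simp [mul_assoc] }
    ?_ ?_⟩
  · apply LinearMap.ext; rintro ⟨y, hy⟩
    apply Subtype.ext
    simp only [LinearMap.coe_comp, Function.comp_apply, LinearMap.coe_mk, AddHom.coe_mk,
      LinearMap.id_coe, id_eq]
    rw [mul_assoc, hba', mem_span_mul_self hf hy]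
  · apply LinearMap.ext; rintro ⟨x, hx⟩
    apply Subtype.ext
    simp only [LinearMap.coe_comp, Function.comp_apply, LinearMap.coe_mk, AddHom.coe_mk,
      LinearMap.id_coe, id_eq]
    rw [mul_assoc, hab', mem_span_mul_self he hx]

theorem rel_trans {e g e₂ : R} (he : IsIdempotentElem e) (he₂ : IsIdempotentElem e₂)
    (h1 : ∃ a b : R, a * b = e ∧ b * a = g) (h2 : ∃ a b : R, a * b = g ∧ b * a = e₂) :
    ∃ a b : R, a * b = e ∧ b * a = e₂ := by
  obtain ⟨a, b, hab, hba⟩ := h1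
  obtain ⟨c, d, hcd, hdc⟩ := h2
  refine ⟨a * c, d * b, ?_, ?_⟩
  · calc a * c * (d * b) = a * (c * d) * b := by simp only [mul_assoc]
    _ = a * (b * a) * b := by rw [hcd, ← hba]
    _ = (a * b) * (a * b) := by simp only [mul_assoc]
    _ = e := by rw [hab, he.eq]
  · calc d * b * (a * c) = d * (b * a) * c := by simp only [mul_assoc]
    _ = d * (c * d) * c := by rw [hba, ← hcd]
    _ = (d * c) * (d * c) := by simp only [mul_assoc]
    _ = e₂ := by rw [hdc, he₂.eq]

end LemmaA

section NilKer
variable {R : Type u} {Q : Type u} [Ring R] [Ring Q]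

theorem corner_prod {A B : Q} (hAB : IsIdempotentElem (A * B)) (hBA : IsIdempotentElem (B * A)) :
    ((A * B) * A * (B * A)) * ((B * A) * B * (A * B)) = A * B ∧
      ((B * A) * B * (A * B)) * ((A * B) * A * (B * A)) = B * A := by
  have h1 : ∀ x : Q, A * (B * (A * (B * x))) = A * (B * x) := fun x => by
    have := congrArg (· * x) hAB.eq
    simpa only [mul_assoc] using this
  have h1' : A * (B * (A * B)) = A * B := by simpa only [mul_assoc] using hAB.eq
  have h2 : ∀ x : Q, B * (A * (B * (A * x))) = B * (A * x) := fun x => by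
    have := congrArg (· * x) hBA.eq
    simpa only [mul_assoc] using this
  have h2' : B * (A * (B * A)) = B * A := by simpa only [mul_assoc] using hBA.eq
  constructor
  · simp only [mul_assoc, h1, h1']
  · simp only [mul_assoc, h2, h2']

theorem idem_map (f : R →+* Q) {e : R} (he : IsIdempotentElem e) :
    IsIdempotentElem (f e) := by
  unfold IsIdempotentElem
  rw [← map_mul, he.eq]

theorem idem_eq_zero_of_ker {f : R →+* Q} (hker : ∀ x, f x = 0 → IsNilpotent x)
    {x : R} (hx : IsIdempotentElem x) (hfx : f x = 0) : x = 0 := by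
  obtain ⟨n, hn⟩ := hker x hfx
  calc x = x ^ (n + 1) := (hx.pow_succ_eq n).symm
  _ = x ^ n * x := by rw [pow_succ]
  _ = 0 := by rw [hn, zero_mul]

/-- Inverse of `e + c` in the corner ring `eRe`, for `c` nilpotent commuting with `e`. -/
theorem corner_inv {e c : R} (he : IsIdempotentElem e) (hec : e * c = c) (hce : c * e = c)
    (hc : IsNilpotent c) :
    ∃ v : R, (e + c) * v = e ∧ v * (e + c) = e ∧ v * e = v ∧ e * v = v ∧
      ∀ (f : R →+* Q), f c = 0 → f v = f e := by
  have hu : IsUnit (1 + c) := hc.isUnit_one_add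
  set d : R := ↑hu.unit⁻¹ with hd
  have hd1 : (1 + c) * d = 1 := hu.mul_val_inv
  have hd2 : d * (1 + c) = 1 := hu.val_inv_mul
  have hcomm : e * (1 + c) = (1 + c) * e := by rw [mul_add, add_mul, mul_one, one_mul, hec, hce]
  have hde : d * e = e * d := by
    have h1 : d * (e * (1 + c)) * d = d * ((1 + c) * e) * d := by rw [hcomm]
    have h2 : d * (e * (1 + c)) * d = d * e := by
      rw [← mul_assoc d e (1 + c), mul_assoc (d * e) (1 + c) d, hd1, mul_one]
    have h3 : d * ((1 + c) * e) * d = e * d := by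
      rw [← mul_assoc d (1 + c) e, hd2, one_mul]
    rw [h2, h3] at h1; exact h1
  have hcomm' : c * (1 + c) = (1 + c) * c := by rw [mul_add, add_mul, mul_one, one_mul]
  have hcd : d * c = c * d := by
    have h1 : d * (c * (1 + c)) * d = d * ((1 + c) * c) * d := by rw [hcomm']
    have h2 : d * (c * (1 + c)) * d = d * c := by
      rw [← mul_assoc d c (1 + c), mul_assoc (d * c) (1 + c) d, hd1, mul_one]
    have h3 : d * ((1 + c) * c) * d = c * d := by
      rw [← mul_assoc d (1 + c) c, hd2, one_mul]
    rw [h2, h3] at h1; exact h1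
  have split : e + c = (1 + c) - (1 - e) := by abel
  have g1 : (e + c) * (e * d) = e := by
    calc (e + c) * (e * d) = (1 + c) * (e * d) - (1 - e) * (e * d) := by
          rw [split, sub_mul]
    _ = e * ((1 + c) * d) - ((1 : R) * (e * d) - e * (e * d)) := by
          rw [← mul_assoc (1 + c) e d, ← hcomm, mul_assoc, sub_mul]
    _ = e - (e * d - e * d) := by
          rw [hd1, mul_one, one_mul, ← mul_assoc, he.eq]
    _ = e := by rw [sub_self, sub_zero]
  have hece : (e + c) * e = e + c := by rw [add_mul, he.eq, hce]
  have hecd : (e + c) * d = e := by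
    have h := g1
    rwa [← mul_assoc, hece] at h
  refine ⟨e * d, g1, ?_, ?_, ?_, ?_⟩
  · calc (e * d) * (e + c) = e * (d * (e + c)) := by rw [mul_assoc]
    _ = e * ((e + c) * d) := by rw [mul_add, add_mul, hde, hcd]
    _ = e * e := by rw [hecd]
    _ = e := he.eq
  · rw [mul_assoc, hde, ← mul_assoc, he.eq]
  · rw [← mul_assoc, he.eq]
  · intro f hfc
    have hfd : f d = 1 := by
      have h := congrArg f hd1
      rwa [map_mul, map_add, map_one, hfc, add_zero, one_mul] at h
    rw [map_mul, hfd, mul_one]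

/-- Two idempotents with the same image mod a nil kernel are "isomorphic". -/
theorem rel_of_ker_eq {f : R →+* Q} (hker : ∀ x, f x = 0 → IsNilpotent x)
    {g e₂ : R} (hg : IsIdempotentElem g) (he₂ : IsIdempotentElem e₂)
    (hfeq : f g = f e₂) : ∃ a b : R, a * b = g ∧ b * a = e₂ := by
  set m : R := g + e₂ - (g * e₂ + g * e₂) with hm
  have hfge : f (g * e₂) = f e₂ := by rw [map_mul, hfeq, ← map_mul, he₂.eq]
  have hfm : f m = 0 := by
    rw [hm, map_sub, map_add, map_add, hfge, hfeq]
    abel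
  have hmnil : IsNilpotent m := hker m hfm
  have hu : IsUnit (1 - m) := hmnil.isUnit_one_sub
  set w : R := ↑hu.unit⁻¹ with hw
  have hw1 : (1 - m) * w = 1 := hu.mul_val_inv
  have hw2 : w * (1 - m) = 1 := hu.val_inv_mul
  have hgm : g * m = g - g * e₂ := by
    rw [hm, mul_sub, mul_add, mul_add, ← mul_assoc g g e₂, hg.eq]
    abel
  have hgz : g * (1 - m) = g * e₂ := by rw [mul_sub, mul_one, hgm]; abel
  have hme : m * e₂ = e₂ - g * e₂ := by
    rw [hm, sub_mul, add_mul, add_mul, mul_assoc g e₂ e₂, he₂.eq]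
    abel
  have hze : (1 - m) * e₂ = g * e₂ := by rw [sub_mul, one_mul, hme]; abel
  refine ⟨g * (1 - m), w * g, ?_, ?_⟩
  · calc g * (1 - m) * (w * g) = g * ((1 - m) * w) * g := by simp only [mul_assoc]
    _ = g := by rw [hw1, mul_one, hg.eq]
  · calc w * g * (g * (1 - m)) = w * ((g * g) * (1 - m)) := by simp only [mul_assoc]
    _ = w * ((1 - m) * e₂) := by rw [hg.eq, hgz, ← hze]
    _ = e₂ := by rw [← mul_assoc, hw2, one_mul]

/-- Lift a "rel" witness along a surjection with nil kernel. -/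
theorem rel_lift {f : R →+* Q} (hsurj : Function.Surjective f)
    (hker : ∀ x, f x = 0 → IsNilpotent x)
    {e e₂ : R} (he : IsIdempotentElem e) (he₂ : IsIdempotentElem e₂)
    {A B : Q} (hAB : A * B = f e) (hBA : B * A = f e₂) :
    ∃ a b : R, a * b = e ∧ b * a = e₂ := by
  obtain ⟨x, rfl⟩ := hsurj A
  obtain ⟨y, rfl⟩ := hsurj B
  have hfe : IsIdempotentElem (f e) := idem_map f he
  have hfe₂ : IsIdempotentElem (f e₂) := idem_map f he₂
  have hXY : IsIdempotentElem (f x * f y) := by rw [hAB]; exact hfe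
  have hYX : IsIdempotentElem (f y * f x) := by rw [hBA]; exact hfe₂
  obtain ⟨hcp1, hcp2⟩ := corner_prod hXY hYX
  set a : R := e * x * e₂ with ha
  set b : R := e₂ * y * e with hb
  have hfa : f a = f e * f x * f e₂ := by rw [ha, map_mul, map_mul]
  have hfb : f b = f e₂ * f y * f e := by rw [hb, map_mul, map_mul]
  have hfab : f (a * b) = f e := by
    rw [map_mul, hfa, hfb, ← hAB, ← hBA, hcp1]
  set c : R := a * b - e with hc
  have heca : e * a = a := by rw [ha, ← mul_assoc, ← mul_assoc, he.eq]
  have hace : b * e = b := by rw [hb, mul_assoc, mul_assoc, he.eq, ← mul_assoc]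
  have habe : a * b * e = a * b := by rw [mul_assoc, hace]
  have heab : e * (a * b) = a * b := by rw [← mul_assoc, heca]
  have hec : e * c = c := by rw [hc, mul_sub, heab, he.eq]
  have hce : c * e = c := by rw [hc, sub_mul, habe, he.eq]
  have hcnil : IsNilpotent c := hker c (by rw [hc, map_sub, hfab, sub_self])
  obtain ⟨v, hv1, hv2, hv3, hv4, hv5⟩ := corner_inv (Q := Q) he hec hce hcnil
  have hsplit : a * b = e + c := by rw [hc]; abel
  have hab₁ : a * (b * v) = e := by rw [← mul_assoc, hsplit, hv1]
  have hfv : f v = f e := hv5 f (by rw [hc, map_sub, hfab, sub_self])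
  have hfb₁ : f (b * v) = f b := by
    rw [map_mul, hfv, hfb, mul_assoc (f e₂ * f y) (f e) (f e), hfe.eq]
  set g : R := b * v * a with hgdef
  have hg : IsIdempotentElem g := by
    unfold IsIdempotentElem
    calc b * v * a * (b * v * a) = b * v * (a * (b * v)) * a := by simp only [mul_assoc]
    _ = b * v * e * a := by rw [hab₁]
    _ = b * v * a := by rw [mul_assoc (b * v) e a, heca, ← mul_assoc]
  have hfg : f g = f e₂ := by
    rw [hgdef, map_mul, hfb₁, hfb, hfa, ← hAB, ← hBA, hcp2]
  have hrel1 : ∃ p q : R, p * q = e ∧ q * p = g := ⟨a, b * v, hab₁, rfl⟩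
  have hrel2 : ∃ p q : R, p * q = g ∧ q * p = e₂ := rel_of_ker_eq hker hg he₂ hfg
  obtain ⟨p, q, h1, h2⟩ := hrel1
  obtain ⟨p', q', h3, h4⟩ := hrel2
  refine ⟨p * p', q' * q, ?_, ?_⟩
  · calc p * p' * (q' * q) = p * (p' * q') * q := by simp only [mul_assoc]
    _ = p * (q * p) * q := by rw [h3, ← h2]
    _ = (p * q) * (p * q) := by simp only [mul_assoc]
    _ = e := by rw [h1, he.eq]
  · calc q' * q * (p * p') = q' * (q * p) * p' := by simp only [mul_assoc]
    _ = q' * (p' * q') * p' := by rw [h2, ← h3]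
    _ = (q' * p') * (q' * p') := by simp only [mul_assoc]
    _ = e₂ := by rw [h4, he₂.eq]

/-- Primitivity ascends along a surjection with nil kernel. -/
theorem primitive_map {f : R →+* Q} (hsurj : Function.Surjective f)
    (hker : ∀ x, f x = 0 → IsNilpotent x)
    {e : R} (hp : IsPrimitiveIdem R e) : IsPrimitiveIdem Q (f e) := by
  obtain ⟨he, hne, hmain⟩ := hp
  refine ⟨idem_map f he, ?_, ?_⟩
  · intro h0
    exact hne (idem_eq_zero_of_ker hker he h0)
  · intro φ γ hφ hγ hφγ hγφ hsum
    have hφe : φ * f e = φ := by rw [← hsum, mul_add, hφ.eq, hφγ, add_zero]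
    have heφ : f e * φ = φ := by rw [← hsum, add_mul, hφ.eq, hγφ, add_zero]
    have h1 : φ * f (1 - e) = 0 := by
      rw [map_sub, map_one, mul_sub, mul_one, hφe, sub_self]
    have h2 : f (1 - e) * φ = 0 := by
      rw [map_sub, map_one, sub_mul, one_mul, heφ, sub_self]
    have hrange : φ ∈ f.range := by
      obtain ⟨x, hx⟩ := hsurj φ
      exact ⟨x, hx⟩
    obtain ⟨e', he', hfe', he'1, he'2⟩ :=
      exists_isIdempotentElem_mul_eq_zero_of_ker_isNilpotent f
        (fun x hx => hker x (by rwa [RingHom.mem_ker] at hx)) φ hrange hφ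
        (1 - e) he.one_sub h1 h2
    have he'e : e' * e = e' := by
      have h := he'1
      rw [mul_sub, mul_one, sub_eq_zero] at h
      exact h.symm
    have hee' : e * e' = e' := by
      have h := he'2
      rw [sub_mul, one_mul, sub_eq_zero] at h
      exact h.symm
    have hgidem : IsIdempotentElem (e - e') := by
      unfold IsIdempotentElem
      rw [mul_sub, sub_mul, sub_mul, he.eq, he'e, hee', he'.eq]
      abel
    have ho1 : e' * (e - e') = 0 := by rw [mul_sub, he'e, he'.eq, sub_self]
    have ho2 : (e - e') * e' = 0 := by rw [sub_mul, hee', he'.eq, sub_self]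
    rcases hmain e' (e - e') he' hgidem ho1 ho2 (by abel) with h | h
    · left; rw [← hfe', h, map_zero]
    · right
      have hee : e = e' := by rwa [sub_eq_zero] at h
      have h2 : φ + γ = φ := by rw [hsum, hee, hfe']
      exact add_eq_left.mp h2


theorem primitive_of_map {f : R →+* Q} (hker : ∀ x, f x = 0 → IsNilpotent x)
    {e : R} (he : IsIdempotentElem e)
    (hp : IsPrimitiveIdem Q (f e)) : IsPrimitiveIdem R e := by
  obtain ⟨hfe, hne, hmain⟩ := hp
  refine ⟨he, ?_, ?_⟩
  · rintro rfl; exact hne (map_zero f)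
  · intro p q hpid hqid hpq hqp hsum
    rcases hmain (f p) (f q) (idem_map f hpid) (idem_map f hqid)
      (by rw [← map_mul, hpq, map_zero]) (by rw [← map_mul, hqp, map_zero])
      (by rw [← map_add, hsum]) with h | h
    · exact Or.inl (idem_eq_zero_of_ker hker hpid h)
    · exact Or.inr (idem_eq_zero_of_ker hker hqid h)

end NilKer

section Semisimple
variable {Q : Type u} [Ring Q]

theorem span_ne_bot_of_ne_zero {x : Q} (hx : x ≠ 0) : Ideal.span ({x} : Set Q) ≠ ⊥ := by
  intro h
  have hm : x ∈ Ideal.span ({x} : Set Q) := Submodule.mem_span_singleton_self x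
  rw [h] at hm
  exact hx ((Submodule.mem_bot Q).mp hm)

/-- If `span {φ}` is an atom then `φ` is a primitive idempotent. -/
theorem primitive_of_atom {φ : Q} (hφ : IsIdempotentElem φ)
    (hat : IsAtom (Ideal.span ({φ} : Set Q))) : IsPrimitiveIdem Q φ := by
  have hφ0 : φ ≠ 0 := by
    rintro rfl
    exact hat.1 (Submodule.span_zero_singleton Q)
  refine ⟨hφ, hφ0, ?_⟩
  intro p q hp hq hpq hqp hsum
  by_cases hp0 : p = 0
  · exact Or.inl hp0
  · right
    have hpφ : p * φ = p := by rw [← hsum, mul_add, hp.eq, hpq, add_zero]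
    have hqφ : q * φ = q := by rw [← hsum, mul_add, hqp, hq.eq, zero_add]
    have hple : Ideal.span ({p} : Set Q) ≤ Ideal.span ({φ} : Set Q) := by
      rw [Ideal.span_le, Set.singleton_subset_iff]
      rw [← hpφ]
      exact Submodule.smul_mem _ p (Submodule.mem_span_singleton_self φ)
    have heq : Ideal.span ({p} : Set Q) = Ideal.span ({φ} : Set Q) := by
      rcases lt_or_eq_of_le hple with h | h
      · exact absurd (hat.2 _ h) (span_ne_bot_of_ne_zero hp0)
      · exact h
    have hqmem : q ∈ Ideal.span ({p} : Set Q) := by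
      rw [heq, ← hqφ]
      exact Submodule.smul_mem _ q (Submodule.mem_span_singleton_self φ)
    obtain ⟨c, hc⟩ := Submodule.mem_span_singleton.mp hqmem
    have : q * p = q := by
      rw [← hc]
      simp only [smul_eq_mul, mul_assoc, hp.eq]
    rw [← this, hqp]

/-- Primitive idempotents generate atoms, over a semisimple ring. -/
theorem atom_of_primitive [IsSemisimpleRing Q] {φ : Q} (hp : IsPrimitiveIdem Q φ) :
    IsAtom (Ideal.span ({φ} : Set Q)) := by
  obtain ⟨hφ, hφ0, hmain⟩ := hp
  constructor
  · exact span_ne_bot_of_ne_zero hφ0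
  · intro N hN
    by_contra hN0
    obtain ⟨C, hC⟩ := exists_isCompl N
    set N' : Ideal Q := C ⊓ Ideal.span ({φ} : Set Q) with hN'
    have hsup : N ⊔ N' = Ideal.span ({φ} : Set Q) := by
      rw [hN', ← sup_inf_assoc_of_le C hN.le, hC.sup_eq_top, top_inf_eq]
    have hinf : N ⊓ N' ≤ ⊥ := by
      rw [hN']
      exact le_trans (inf_le_inf_left N inf_le_left) hC.inf_eq_bot.le
    have hφmem : φ ∈ N ⊔ N' := hsup.symm ▸ Submodule.mem_span_singleton_self φ
    obtain ⟨p, hpN, q, hqN', hpq⟩ := Submodule.mem_sup.mp hφmem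
    have hpφ : p * φ = p := by
      obtain ⟨c, hc⟩ := Submodule.mem_span_singleton.mp (hsup ▸ Submodule.mem_sup_left hpN)
      rw [← hc]; simp only [smul_eq_mul, mul_assoc, hφ.eq]
    have hqφ : q * φ = q := by
      obtain ⟨c, hc⟩ := Submodule.mem_span_singleton.mp (hsup ▸ Submodule.mem_sup_right hqN')
      rw [← hc]; simp only [smul_eq_mul, mul_assoc, hφ.eq]
    -- p * q = p - p * p lies in both N and N'
    have hpq_mem_N' : p * q ∈ N' := Submodule.smul_mem _ p hqN'
    have hpq_eq : p * q = p - p * p := by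
      have h : p * p + p * q = p := by rw [← mul_add, hpq, hpφ]
      exact eq_sub_of_add_eq' h
    have hpq_mem_N : p * q ∈ N := by
      rw [hpq_eq]
      exact Submodule.sub_mem _ hpN (Submodule.smul_mem _ p hpN)
    have hpq0 : p * q = 0 := by
      have : p * q ∈ N ⊓ N' := ⟨hpq_mem_N, hpq_mem_N'⟩
      simpa using hinf this
    have hpp : p * p = p := by
      have h := hpq_eq
      rw [hpq0] at h
      exact (sub_eq_zero.mp h.symm).symm
    -- symmetric
    have hqp_mem_N : q * p ∈ N := Submodule.smul_mem _ q hpN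
    have hqp_eq : q * p = q - q * q := by
      have h : q * p + q * q = q := by rw [← mul_add, hpq, hqφ]
      exact eq_sub_of_add_eq h
    have hqp_mem_N' : q * p ∈ N' := by
      rw [hqp_eq]
      exact Submodule.sub_mem _ hqN' (Submodule.smul_mem _ q hqN')
    have hqp0 : q * p = 0 := by
      have : q * p ∈ N ⊓ N' := ⟨hqp_mem_N, hqp_mem_N'⟩
      simpa using hinf this
    have hqq : q * q = q := by
      have h := hqp_eq
      rw [hqp0] at h
      exact (sub_eq_zero.mp h.symm).symm
    rcases hmain p q hpp hqq hpq0 hqp0 hpq with h | h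
    · -- p = 0 : then φ = q ∈ N', so span ≤ N', hence N ≤ N ⊓ N' = ⊥
      apply hN0
      have hφN' : φ ∈ N' := by rw [← hpq, h, zero_add]; exact hqN'
      have hle : Ideal.span ({φ} : Set Q) ≤ N' := by
        rw [Ideal.span_le, Set.singleton_subset_iff]; exact hφN'
      have : N ≤ N ⊓ N' := le_inf le_rfl (le_trans hN.le hle)
      exact le_bot_iff.mp (le_trans this hinf)
    · -- q = 0 : then φ = p ∈ N, so span ≤ N, contradicting N < span
      exact absurd (le_antisymm hN.le (by
        rw [Ideal.span_le, Set.singleton_subset_iff]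
        rw [← hpq, h, add_zero]; exact hpN)) hN.ne

theorem idem_central_of_reduced (hred : ∀ x : Q, x * x = 0 → x = 0)
    {φ : Q} (hφ : IsIdempotentElem φ) (x : Q) : φ * x = x * φ := by
  have hφφ : ∀ z : Q, φ * (φ * z) = φ * z := fun z => by rw [← mul_assoc, hφ.eq]
  have h1 : φ * x - φ * x * φ = 0 := by
    apply hred
    have expand : (φ * x - φ * x * φ) * (φ * x - φ * x * φ)
        = φ * (x * (φ * x)) - φ * (x * (φ * (x * φ))) - φ * (x * (φ * (φ * x)))
          + φ * (x * (φ * (φ * (x * φ)))) := by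
      simp only [mul_sub, sub_mul, mul_assoc]
      abel
    rw [expand]
    simp only [hφφ]
    abel
  have h2 : x * φ - φ * x * φ = 0 := by
    apply hred
    have expand : (x * φ - φ * x * φ) * (x * φ - φ * x * φ)
        = x * (φ * (x * φ)) - x * (φ * (φ * (x * φ))) - φ * (x * (φ * (x * φ)))
          + φ * (x * (φ * (φ * (x * φ)))) := by
      simp only [mul_sub, sub_mul, mul_assoc]
      abel
    rw [expand]
    simp only [hφφ]
    abel
  rw [sub_eq_zero] at h1 h2
  rw [h1, ← h2]

theorem reduced_of_family [IsSemisimpleRing Q] {ι : Type u} [Fintype ι] (φ : ι → Q)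
    (hidem : ∀ i, IsIdempotentElem (φ i)) (hortho : ∀ i j, i ≠ j → φ i * φ j = 0)
    (hsum : ∑ i, φ i = 1) (hprim : ∀ i, IsPrimitiveIdem Q (φ i))
    (hnonrel : ∀ i j, (∃ A B : Q, A * B = φ i ∧ B * A = φ j) → i = j) :
    ∀ x : Q, x * x = 0 → x = 0 := by
  classical
  have hat : ∀ i, IsAtom (Ideal.span ({φ i} : Set Q)) := fun i => atom_of_primitive (hprim i)
  have hker_inf : ∀ i (y : Q), φ i * y = y → y ≠ 0 →
      LinearMap.ker (LinearMap.toSpanSingleton Q Q y) ⊓ Ideal.span ({φ i} : Set Q) = ⊥ := by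
    intro i y hφy hy
    apply (hat i).2
    apply lt_of_le_of_ne inf_le_right
    intro heq
    have h1 : φ i ∈ LinearMap.ker (LinearMap.toSpanSingleton Q Q y)
        ⊓ Ideal.span ({φ i} : Set Q) := by
      rw [heq]; exact Submodule.mem_span_singleton_self _
    have hmem := (Submodule.mem_inf.mp h1).1
    rw [LinearMap.mem_ker, LinearMap.toSpanSingleton_apply, smul_eq_mul, hφy] at hmem
    exact hy hmem
  have hvan : ∀ i j, i ≠ j → ∀ z : Q, φ i * z * φ j = 0 := by
    intro i j hij z
    by_contra hy0
    set y : Q := φ i * z * φ j with hydef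
    have hφiy : φ i * y = y := by
      rw [hydef, ← mul_assoc, ← mul_assoc, (hidem i).eq]
    have hyφj : y * φ j = y := by
      rw [hydef, mul_assoc (φ i * z) (φ j) (φ j), (hidem j).eq]
    set ρ : Q →ₗ[Q] Q := LinearMap.toSpanSingleton Q Q y with hρdef
    have hρ_app : ∀ m : Q, ρ m = m * y := fun m => by
      rw [hρdef, LinearMap.toSpanSingleton_apply, smul_eq_mul]
    have hkinf : LinearMap.ker ρ ⊓ Ideal.span ({φ i} : Set Q) = ⊥ :=
      hker_inf i y hφiy hy0
    have himg_le : Submodule.map ρ (Ideal.span ({φ i} : Set Q))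
        ≤ Ideal.span ({φ j} : Set Q) := by
      rintro _ ⟨m, hm, rfl⟩
      rw [hρ_app]
      have h : m * y = (m * (φ i * z)) • φ j := by
        rw [hydef, smul_eq_mul]
        simp only [mul_assoc]
      rw [h]
      exact Submodule.smul_mem _ _ (Submodule.mem_span_singleton_self _)
    have himg : Submodule.map ρ (Ideal.span ({φ i} : Set Q))
        = Ideal.span ({φ j} : Set Q) := by
      rcases lt_or_eq_of_le himg_le with h | h
      · exfalso
        have hb := (hat j).2 _ h
        have hyin : y ∈ Submodule.map ρ (Ideal.span ({φ i} : Set Q)) :=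
          ⟨φ i, Submodule.mem_span_singleton_self _, by rw [hρ_app, hφiy]⟩
        rw [hb] at hyin
        exact hy0 ((Submodule.mem_bot Q).mp hyin)
      · exact h
    have hφjmem : φ j ∈ Submodule.map ρ (Ideal.span ({φ i} : Set Q)) := by
      rw [himg]; exact Submodule.mem_span_singleton_self _
    obtain ⟨m, hmmem, hmy⟩ := hφjmem
    rw [hρ_app] at hmy
    have hymmem : y * m ∈ Ideal.span ({φ i} : Set Q) := by
      obtain ⟨c, hc⟩ := Submodule.mem_span_singleton.mp hmmem
      rw [← hc, smul_eq_mul, ← mul_assoc]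
      exact Submodule.smul_mem _ _ (Submodule.mem_span_singleton_self _)
    have hdiff : y * m - φ i ∈ LinearMap.ker ρ ⊓ Ideal.span ({φ i} : Set Q) := by
      rw [Submodule.mem_inf]
      constructor
      · rw [LinearMap.mem_ker, map_sub, hρ_app, hρ_app, mul_assoc, hmy, hyφj, hφiy, sub_self]
      · exact Submodule.sub_mem _ hymmem (Submodule.mem_span_singleton_self _)
    rw [hkinf] at hdiff
    have hym : y * m = φ i := by
      have h := (Submodule.mem_bot Q).mp hdiff
      rwa [sub_eq_zero] at h
    exact hij (hnonrel j i ⟨m, y, hmy, hym⟩).symm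
  have hcent : ∀ i (z : Q), φ i * z = z * φ i := by
    intro i z
    have h1 : φ i * z = φ i * z * φ i := by
      conv_lhs => rw [← mul_one (φ i * z), ← hsum, Finset.mul_sum]
      exact Finset.sum_eq_single i (fun j _ hji => hvan i j (Ne.symm hji) z)
        (fun h => absurd (Finset.mem_univ i) h)
    have h2 : z * φ i = φ i * z * φ i := by
      conv_lhs => rw [← one_mul (z * φ i), ← hsum, Finset.sum_mul]
      rw [Finset.sum_eq_single i (fun j _ hji => by rw [← mul_assoc]; exact hvan j i hji z)
        (fun h => absurd (Finset.mem_univ i) h), ← mul_assoc]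
    rw [h1, ← h2]
  intro x hx
  have hxi : ∀ i, x * φ i = 0 := by
    intro i
    by_contra hy0
    set y : Q := x * φ i with hydef
    have hφiy : φ i * y = y := by
      rw [hydef, ← mul_assoc, hcent i x, mul_assoc, (hidem i).eq]
    have hyy : y * y = 0 := by
      rw [hydef]
      calc x * φ i * (x * φ i) = x * (φ i * x) * φ i := by simp only [mul_assoc]
      _ = x * (x * φ i) * φ i := by rw [hcent i x]
      _ = x * x * (φ i * (φ i)) := by simp only [mul_assoc]
      _ = 0 := by rw [hx, zero_mul]
    have hkinf := hker_inf i y hφiy hy0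
    have hymem : y ∈ LinearMap.ker (LinearMap.toSpanSingleton Q Q y)
        ⊓ Ideal.span ({φ i} : Set Q) := by
      rw [Submodule.mem_inf]
      constructor
      · rw [LinearMap.mem_ker, LinearMap.toSpanSingleton_apply, smul_eq_mul]; exact hyy
      · rw [hydef]; exact Submodule.smul_mem _ _ (Submodule.mem_span_singleton_self _)
    rw [hkinf] at hymem
    exact hy0 ((Submodule.mem_bot Q).mp hymem)
  calc x = x * 1 := (mul_one x).symm
  _ = ∑ i, x * φ i := by rw [← hsum, Finset.mul_sum]
  _ = 0 := Finset.sum_eq_zero fun i _ => hxi i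


open Classical in
theorem exists_sum_of_mem_finsetSup (t : Finset (Ideal Q)) {x : Q}
    (hx : x ∈ t.sup id) :
    ∃ g : Ideal Q → Q, (∀ p ∈ t, g p ∈ p) ∧ ∑ p ∈ t, g p = x := by
  classical
  induction t using Finset.cons_induction generalizing x with
  | empty =>
    refine ⟨0, by simp, ?_⟩
    exact ((Submodule.mem_bot Q).mp (by simpa using hx)).symm
  | cons a s ha ih =>
    rw [Finset.sup_cons] at hx
    obtain ⟨y, hy, z, hz, rfl⟩ := Submodule.mem_sup.mp hx
    obtain ⟨g, hg1, hg2⟩ := ih hz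
    refine ⟨Function.update g a y, ?_, ?_⟩
    · intro p hp
      rcases Finset.mem_cons.mp hp with rfl | hp
      · rw [Function.update_self]; exact hy
      · rw [Function.update_of_ne (fun h => ha (by rwa [h] at hp))]; exact hg1 p hp
    · rw [Finset.sum_cons, Function.update_self]
      congr 1
      rw [← hg2]
      exact Finset.sum_congr rfl fun p hp =>
        by rw [Function.update_of_ne (fun h => ha (by rwa [h] at hp))]

theorem component_eq_zero {s : Set (Ideal Q)} (hind : sSupIndep s)
    {t : Finset (Ideal Q)} (hts : ↑t ⊆ s) (x : Ideal Q → Q)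
    (hx : ∀ p ∈ t, x p ∈ p) (hsum : ∑ p ∈ t, x p = 0) :
    ∀ p ∈ t, x p = 0 := by
  classical
  intro p hp
  have hxp : x p = -∑ q ∈ t.erase p, x q := by
    have h := Finset.add_sum_erase t x hp
    rw [hsum] at h
    exact eq_neg_of_add_eq_zero_left h
  have hmem : x p ∈ sSup (s \ {p}) := by
    rw [hxp]
    refine Submodule.neg_mem _ (Submodule.sum_mem _ fun q hq => ?_)
    have hq' := Finset.mem_erase.mp hq
    exact (le_sSup (Set.mem_diff_singleton.mpr ⟨hts hq'.2, hq'.1⟩)) (hx q hq'.2)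
  have hdisj := hind (hts hp)
  have := hdisj.le_bot ⟨hx p hp, hmem⟩
  simpa using this
  
/-- Over a semisimple ring there is a finite "complete" family of idempotents
generating atoms. -/
theorem exists_complete_family [IsSemisimpleRing Q] :
    ∃ (ι : Type u) (_ : Fintype ι) (v : ι → Q),
      (∀ i, IsIdempotentElem (v i)) ∧ (∀ i j, i ≠ j → v i * v j = 0) ∧ (∑ i, v i = 1) ∧
      ∀ i, IsAtom (Ideal.span ({v i} : Set Q)) := by
  classical
  obtain ⟨s, hind, hsup, hsimple⟩ :=
    IsSemisimpleModule.exists_sSupIndep_sSup_simples_eq_top Q Q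
  have hcomp : IsCompactElement (⊤ : Ideal Q) :=
    (Submodule.fg_iff_compact _).mp ⟨{1}, by simp⟩
  obtain ⟨t, hts, htsup⟩ := (CompleteLattice.isCompactElement_iff_exists_le_sSup_of_le_sSup _ _).mp hcomp s (by rw [hsup])
  obtain ⟨g, hg1, hg2⟩ := exists_sum_of_mem_finsetSup t (htsup Submodule.mem_top)
  -- components multiply like a complete orthogonal family
  have key : ∀ x : Q, ∀ p ∈ t, x ∈ (p : Ideal Q) →
      (x * g p = x ∧ ∀ q ∈ t, q ≠ p → x * g q = 0) := by
    intro x p hp hxp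
    have happ := component_eq_zero hind hts
      (fun q => x * g q - (if q = p then x else 0))
      (fun q hq => by
        refine Submodule.sub_mem _ (Submodule.smul_mem _ x (hg1 q hq)) ?_
        split
        · next h => rw [h]; exact hxp
        · exact Submodule.zero_mem _)
      (by
        rw [Finset.sum_sub_distrib, ← Finset.mul_sum, hg2, mul_one,
          Finset.sum_ite_eq' t p (fun _ => x), if_pos hp, sub_self])
    constructor
    · have h2 : x * g p - (if p = p then x else 0) = 0 := happ p hp
      rw [if_pos rfl, sub_eq_zero] at h2
      exact h2
    · intro q hq hqp
      have h2 : x * g q - (if q = p then x else 0) = 0 := happ q hq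
      rw [if_neg hqp, sub_zero] at h2
      exact h2
  have hspan : ∀ p ∈ t, Ideal.span ({g p} : Set Q) = p := by
    intro p hp
    apply le_antisymm
    · rw [Ideal.span_le, Set.singleton_subset_iff]
      exact hg1 p hp
    · intro x hx
      have := (key x p hp hx).1
      rw [← this]
      exact Submodule.smul_mem _ x (Submodule.mem_span_singleton_self _)
  refine ⟨{p : Ideal Q // p ∈ t}, inferInstance, fun i => g i.1, ?_, ?_, ?_, ?_⟩
  · rintro ⟨p, hp⟩
    exact (key (g p) p hp (hg1 p hp)).1
  · rintro ⟨p, hp⟩ ⟨q, hq⟩ hne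
    have hpq : p ≠ q := fun h => hne (Subtype.ext h)
    exact (key (g p) p hp (hg1 p hp)).2 q hq (Ne.symm hpq)
  · rw [show (∑ i : {p : Ideal Q // p ∈ t}, g i.1) = ∑ p ∈ t, g p from Finset.sum_coe_sort t g]
    exact hg2
  · rintro ⟨p, hp⟩
    have : IsSimpleModule Q p := hsimple p (hts hp)
    rw [hspan p hp]
    exact (isSimpleModule_iff_isAtom).mp this

end Semisimple

section Glue


variable (R : Type u) [Ring R]

theorem jac_mul_right : ∀ {x y : R}, x ∈ jac R → x * y ∈ jac R :=
  fun {_ _} hx => by unfold jac at hx ⊢; exact Ideal.mul_mem_right _ _ hx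

/-- The Jacobson radical as a two-sided ideal. -/
def jacT : TwoSidedIdeal R :=
  TwoSidedIdeal.mk' (jac R) (jac R).zero_mem
    (fun hx hy => (jac R).add_mem hx hy)
    (fun hx => (jac R).neg_mem hx)
    (fun hy => Ideal.mul_mem_left _ _ hy)
    (fun hx => jac_mul_right R hx)

abbrev QR := (jacT R).ringCon.Quotient

noncomputable instance : Ring (QR R) := inferInstance

def qmap : R →+* QR R := (jacT R).ringCon.mk'

theorem qmap_surjective : Function.Surjective (qmap R) := fun q =>
  Quotient.inductionOn' q fun a => ⟨a, rfl⟩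

theorem qmap_ker (x : R) : qmap R x = 0 ↔ x ∈ jac R := by
  have h0 : (0 : QR R) = qmap R 0 := (map_zero (qmap R)).symm
  rw [h0]
  show (x : QR R) = (0 : R) ↔ _
  rw [RingCon.eq, TwoSidedIdeal.rel_iff, sub_zero]
  exact TwoSidedIdeal.mem_mk' _ _ _ _ _ _ x

/-- The natural `qmap`-semilinear bijection `R ⧸ jac R ≃ QR R`. -/
noncomputable def qequiv : (R ⧸ jac R) →ₛₗ[qmap R] QR R where
  toFun m := Quotient.liftOn' m (fun a => qmap R a) (fun a b h => by
    have hab : a - b ∈ jac R := (Submodule.quotientRel_def (jac R)).mp h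
    have : qmap R (a - b) = 0 := (qmap_ker R _).mpr hab
    rw [map_sub, sub_eq_zero] at this
    exact this)
  map_add' x y := Quotient.inductionOn₂' x y fun a b => by
    change qmap R (a + b) = qmap R a + qmap R b
    exact map_add _ _ _
  map_smul' r x := Quotient.inductionOn' x fun a => by
    change qmap R (r * a) = qmap R r * qmap R a
    exact map_mul _ _ _

theorem qequiv_bijective : Function.Bijective (qequiv R) := by
  constructor
  · intro x y h
    induction x using Quotient.inductionOn' with | h a =>
    induction y using Quotient.inductionOn' with | h b =>
    have h' : qmap R a = qmap R b := h
    have : qmap R (a - b) = 0 := by rw [map_sub, h', sub_self]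
    have hab : a - b ∈ jac R := (qmap_ker R _).mp this
    exact (Submodule.Quotient.eq _).mpr hab
  · intro q
    obtain ⟨a, ha⟩ := qmap_surjective R q
    exact ⟨Quotient.mk'' a, ha⟩

theorem qr_semisimple (h : IsSemisimpleModule R (R ⧸ jac R)) : IsSemisimpleRing (QR R) := by
  haveI : RingHomSurjective (qmap R) := ⟨qmap_surjective R⟩
  exact (LinearMap.isSemisimpleModule_iff_of_bijective (qequiv R) (qequiv_bijective R)).mp h

end Glue

end Statement1Aux

/-- A semiperfect ring with nil Jacobson radical is basic iff its
Jacobson radical coincides with the set of nilpotent elements. -/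
theorem statement_1 (R : Type u) [Ring R] (hsp : IsSemiperfectRing R)
    (hnil : ∀ x ∈ jac R, IsNilpotent x) :
    IsBasicRing R ↔ (jac R : Set R) = {x : R | IsNilpotent x} := by
  classical
  obtain ⟨hsl, -⟩ := hsp
  set f := Statement1Aux.qmap R with hf
  have hsurj := Statement1Aux.qmap_surjective R
  have hker := Statement1Aux.qmap_ker R
  have hkn : ∀ x : R, f x = 0 → IsNilpotent x := fun x hx => hnil x ((hker x).mp hx)
  have hkn' : ∀ x ∈ RingHom.ker f, IsNilpotent x := fun x hx =>
    hkn x (by rwa [RingHom.mem_ker] at hx)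
  haveI hss : IsSemisimpleRing (Statement1Aux.QR R) := Statement1Aux.qr_semisimple R hsl
  constructor
  · rintro ⟨ι, hfin, e, ⟨⟨hprim, hortho, hsum⟩, hbas⟩⟩
    have hidem : ∀ i, IsIdempotentElem (e i) := fun i => (hprim i).1
    have hred : ∀ q : Statement1Aux.QR R, q * q = 0 → q = 0 := by
      apply Statement1Aux.reduced_of_family (fun i => f (e i))
      · exact fun i => Statement1Aux.idem_map f (hidem i)
      · intro i j hij; rw [← map_mul, hortho i j hij, map_zero]
      · rw [← map_sum, hsum, map_one]
      · exact fun i => Statement1Aux.primitive_map hsurj hkn (hprim i)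
      · intro i j hrel
        obtain ⟨A, B, hAB, hBA⟩ := hrel
        obtain ⟨a, b, hab, hba⟩ :=
          Statement1Aux.rel_lift hsurj hkn (hidem i) (hidem j) hAB hBA
        exact hbas i j (Statement1Aux.iso_of_rel (hidem i) (hidem j) hab hba)
    have hstep : ∀ y : R, y * y ∈ jac R → y ∈ jac R := by
      intro y hy
      apply (hker y).mp
      apply hred
      rw [← map_mul]
      exact (hker _).mpr hy
    have hindn : ∀ n : ℕ, ∀ y : R, y ^ (n + 1) = 0 → y ∈ jac R := by
      intro n
      induction n with
      | zero =>
        intro y hy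
        rw [pow_one] at hy
        rw [hy]
        exact (jac R).zero_mem
      | succ n ih =>
        intro y hy
        apply hstep
        apply ih
        have h1 : (y * y) ^ (n + 1) = y ^ (n + 1 + 1) * y ^ n := by
          rw [← pow_two, ← pow_mul, ← pow_add]
          congr 1
          ring
        rw [h1, hy, zero_mul]
    apply Set.Subset.antisymm
    · exact fun x hx => hnil x hx
    · rintro x ⟨n, hn⟩
      obtain _ | n := n
      · have h1 : (1 : R) = 0 := by simpa using hn
        have h0 : x = 0 := by rw [← mul_one x, h1, mul_zero]
        exact h0 ▸ (jac R).zero_mem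
      · exact hindn n x hn
  · intro hJ
    have hred : ∀ q : Statement1Aux.QR R, q * q = 0 → q = 0 := by
      intro q hq
      obtain ⟨x, rfl⟩ := hsurj q
      have h1 : x * x ∈ jac R := (hker _).mp (by rw [map_mul]; exact hq)
      have h2 : IsNilpotent (x * x) := by
        have hmem : x * x ∈ (jac R : Set R) := h1
        rw [hJ] at hmem
        exact hmem
      have h3 : IsNilpotent x := by
        obtain ⟨n, hn⟩ := h2
        exact ⟨2 * n, by rw [pow_mul, pow_two, hn]⟩
      have h4 : x ∈ (jac R : Set R) := by rw [hJ]; exact h3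
      exact (hker x).mpr h4
    obtain ⟨ι, hfι, v, hvidem, hvortho, hvsum, hvatom⟩ :=
      Statement1Aux.exists_complete_family (Q := Statement1Aux.QR R)
    have hCOI : CompleteOrthogonalIdempotents v :=
      ⟨⟨hvidem, fun {i j} hij => hvortho i j hij⟩, hvsum⟩
    obtain ⟨E, hE, hfE⟩ :=
      CompleteOrthogonalIdempotents.lift_of_isNilpotent_ker f hkn' hCOI
        (fun i => hsurj (v i))
    have hfEi : ∀ i, f (E i) = v i := fun i => congrFun hfE i
    refine ⟨ι, hfι, E, ⟨⟨?_, ?_, ?_⟩, ?_⟩⟩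
    · intro i
      apply Statement1Aux.primitive_of_map hkn (hE.idem i)
      rw [hfEi i]
      exact Statement1Aux.primitive_of_atom (hvidem i) (hvatom i)
    · exact fun i j hij => hE.ortho hij
    · exact hE.complete
    · intro i j hiso
      obtain ⟨iso⟩ := hiso
      by_contra hij
      obtain ⟨a, b, hab, hba⟩ := Statement1Aux.rel_of_iso (hE.idem i) (hE.idem j) iso
      have h1 : f a * f b = v i := by rw [← map_mul, hab, hfEi i]
      have h2 : f b * f a = v j := by rw [← map_mul, hba, hfEi j]
      have hvi0 : v i = 0 := by
        calc v i = (f a * f b) * (f a * f b) := by rw [h1, (hvidem i).eq]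
        _ = f a * ((f b * f a) * f b) := by simp only [mul_assoc]
        _ = f a * (v j * f b) := by rw [h2]
        _ = (f a * v j) * f b := by rw [mul_assoc]
        _ = (v j * f a) * f b := by
              rw [← Statement1Aux.idem_central_of_reduced hred (hvidem j) (f a)]
        _ = v j * (f a * f b) := by rw [mul_assoc]
        _ = v j * v i := by rw [h1]
        _ = 0 := hvortho j i (Ne.symm hij)
      exact (hvatom i).1 (by rw [hvi0]; exact Submodule.span_zero_singleton _)
end

section
/- Let R be a ring and P a finitely generated projective left R-module. A submodule N of P is superfluous in P if and only if N ⊆ J(R)P. -/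
universe u

open Function CategoryTheory

section Helpers

variable {R M M' : Type u} [Ring R] [AddCommGroup M] [Module R M]
  [AddCommGroup M'] [Module R M']

theorem superfluous_map {N : Submodule R M} (h : Superfluous R M N) (f : M →ₗ[R] M') :
    Superfluous R M' (N.map f) := by
  intro L hL
  have h1 : N ⊔ L.comap f = ⊤ := by
    rw [eq_top_iff]
    intro p _
    have hfp : f p ∈ Submodule.map f N ⊔ L := hL ▸ Submodule.mem_top
    obtain ⟨y, ⟨n, hn, rfl⟩, l, hl, hyl⟩ := Submodule.mem_sup.mp hfp
    refine Submodule.mem_sup.mpr ⟨n, hn, p - n, ?_, by abel⟩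
    simp only [Submodule.mem_comap, map_sub]
    have : f p - f n = l := by rw [← hyl]; abel
    rw [this]; exact hl
  have h2 : L.comap f = ⊤ := h _ h1
  have h3 : Submodule.map f N ≤ L := by
    rintro x ⟨p, _, rfl⟩
    exact (Submodule.mem_comap.mp (h2 ▸ Submodule.mem_top : p ∈ L.comap f))
  rw [← hL, sup_eq_right.mpr h3]

theorem jac_smul_mem_coatom {m : Submodule R M} (hm : IsCoatom m)
    {a : R} (ha : a ∈ jac R) (p : M) : a • p ∈ m := by
  set Q := M ⧸ m
  have hsimple : IsSimpleModule R Q := (isSimpleModule_iff_isCoatom).mpr hm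
  set x : Q := m.mkQ p with hxdef
  suffices h : a • x = 0 by
    rw [← Submodule.Quotient.mk_eq_zero m, ← Submodule.mkQ_apply, map_smul, ← hxdef, h]
  by_cases hx : x = 0
  · rw [hx, smul_zero]
  · set φ : R →ₗ[R] Q := LinearMap.toSpanSingleton R Q x
    have hker : IsCoatom (LinearMap.ker φ) := by
      constructor
      · intro htop
        have : φ 1 = 0 := by
          have : (1 : R) ∈ LinearMap.ker φ := htop ▸ Submodule.mem_top
          simpa using this
        simp [φ, LinearMap.toSpanSingleton_apply] at this
        exact hx this
      · intro I hI
        obtain ⟨u, huI, hu⟩ : ∃ u ∈ I, u ∉ LinearMap.ker φ := by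
          by_contra hcon
          push_neg at hcon
          exact absurd (le_antisymm (fun z hz => hcon z hz) hI.le) hI.ne'
        have hmap : Submodule.map φ I = ⊤ := by
          rcases eq_bot_or_eq_top (Submodule.map φ I) with hb | ht
          · exfalso
            apply hu
            rw [LinearMap.mem_ker, ← Submodule.mem_bot (R := R), ← hb]
            exact Submodule.mem_map_of_mem huI
          · exact ht
        have hxm : x ∈ Submodule.map φ I := hmap ▸ Submodule.mem_top
        obtain ⟨v, hvI, hv⟩ := hxm
        have h1 : (1 : R) - v ∈ LinearMap.ker φ := by
          simp [φ, LinearMap.mem_ker, map_sub, hv, LinearMap.toSpanSingleton_apply]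
        have : (1 : R) ∈ I := by
          have := I.add_mem (hI.le h1) hvI
          simpa using this
        exact Ideal.eq_top_of_isUnit_mem I this isUnit_one
    have hamem : a ∈ LinearMap.ker φ := by
      have : a ∈ sInf {J : Ideal R | ⊥ ≤ J ∧ J.IsMaximal} := ha
      exact Submodule.mem_sInf.mp this _ ⟨bot_le, ⟨hker⟩⟩
    simpa [φ, LinearMap.toSpanSingleton_apply] using hamem

end Helpers

/-- For a finitely generated projective module `P`, a submodule is
superfluous iff it is contained in `J(R)P`. -/
theorem statement_3 (R : Type u) [Ring R] (P : Type u) [AddCommGroup P] [Module R P]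
    [Module.Finite R P] (hP : Module.Projective R P) (N : Submodule R P) :
    Superfluous R P N ↔ N ≤ idealSMul R P (jac R) ⊤ := by
  constructor
  · intro h
    obtain ⟨n, π, hπ⟩ := Module.Finite.exists_fin' R P
    obtain ⟨s, hs⟩ := Module.projective_lifting_property π (LinearMap.id) hπ
    intro x hx
    have hcoord : ∀ i, s x i ∈ jac R := by
      intro i
      refine Submodule.mem_sInf.mpr ?_
      rintro m ⟨-, hm⟩
      by_contra hc
      set c := s x i with hcdef
      set L := Submodule.comap (LinearMap.proj i : (Fin n → R) →ₗ[R] R) m with hLdef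
      have hLne : L ≠ ⊤ := by
        intro htop
        have h1 : (fun _ => (1 : R)) ∈ L := htop ▸ Submodule.mem_top
        exact hm.ne_top ((Ideal.eq_top_iff_one m).mpr h1)
      -- 1 = t + r * c
      have hb : m ⊔ Ideal.span {c} = ⊤ :=
        hm.1.2 _ (left_lt_sup.mpr (fun hle => hc (hle (Ideal.subset_span rfl))))
      obtain ⟨t, ht, y, hy, hty⟩ := Submodule.mem_sup.mp (hb ▸ Submodule.mem_top : (1:R) ∈ m ⊔ Ideal.span {c})
      obtain ⟨r, hr⟩ := Submodule.mem_span_singleton.mp hy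
      have hsup2 : N.map s ⊔ L = ⊤ := by
        rw [eq_top_iff]
        intro z _
        refine Submodule.mem_sup.mpr ⟨(z i * r) • s x, Submodule.smul_mem _ _ (Submodule.mem_map_of_mem hx), z - (z i * r) • s x, ?_, by abel⟩
        have hw : (z - (z i * r) • s x) i = z i * t := by
          have : y = r * c := by rw [← hr]; rfl
          have ht1 : t = 1 - r * c := by rw [← hty, this]; abel
          simp only [Pi.sub_apply, Pi.smul_apply, smul_eq_mul, ht1, ← hcdef]
          noncomm_ring
        show (z - (z i * r) • s x) i ∈ m
        rw [hw]
        exact m.smul_mem (z i) ht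
      exact hLne (superfluous_map h s L hsup2)
    have hx2 : π (s x) = x := DFunLike.congr_fun hs x
    rw [← hx2, pi_eq_sum_univ (s x), map_sum]
    refine Submodule.sum_mem _ (fun i _ => ?_)
    rw [map_smul]
    exact Submodule.subset_span ⟨s x i, hcoord i, _, Submodule.mem_top, rfl⟩
  · intro hN L hsup
    have hcoat : IsCoatomic (Submodule R P) :=
      CompleteLattice.coatomic_of_top_compact ((Submodule.fg_iff_compact _).mp Module.Finite.fg_top)
    rcases (hcoat.eq_top_or_exists_le_coatom L) with h | ⟨m, hm, hLm⟩
    · exact h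
    · exfalso
      have hNm : N ≤ m := by
        refine hN.trans (Submodule.span_le.mpr ?_)
        rintro _ ⟨a, ha, p, -, rfl⟩
        exact jac_smul_mem_coatom hm ha p
      exact hm.1 (top_le_iff.mp (hsup ▸ sup_le hNm hLm))
end

section
/- Let R be a ring. The following are equivalent: (i) for every projective left R-module P, a submodule of P is superfluous in P if and only if it is contained in J(R)P; (ii) the Jacobson radical J(R) is left T-nilpotent. -/
universe u

open Function CategoryTheory

/-! ### Auxiliary lemmas for statement 4 -/

section TNilAux

variable {R : Type u} [Ring R] {M : Type u} [AddCommGroup M] [Module R M]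

lemma list_map_sum_eq_fin {α : Type u} (l : List α) (g : α → M) :
    (l.map g).sum = ∑ i : Fin l.length, g (l.get i) := by
  induction l with
  | nil => simp
  | cons x t ih =>
    show g x + (t.map g).sum = ∑ i : Fin (t.length + 1), g ((x :: t).get i)
    rw [Fin.sum_univ_succ, ih]
    simp

lemma smul_list_pair_sum (r : R) (l : List (R × M)) :
    r • (l.map fun q => q.1 • q.2).sum = ((l.map fun q => (r * q.1, q.2)).map fun q => q.1 • q.2).sum := by
  induction l with
  | nil => simp
  | cons q t ih =>
    rw [List.map_cons, List.sum_cons, smul_add, ih, List.map_cons, List.map_cons,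
      List.sum_cons, smul_smul]

lemma mem_idealSMul_elim {I : Ideal R} {x : M} (hx : x ∈ idealSMul R M I ⊤) :
    ∃ l : List (R × M), (∀ q ∈ l, q.1 ∈ I) ∧ x = (l.map fun q => q.1 • q.2).sum := by
  refine Submodule.span_induction ?_ ?_ ?_ ?_ hx
  · rintro x ⟨a, ha, m, -, rfl⟩
    exact ⟨[(a, m)], by simpa using ha, by simp⟩
  · exact ⟨[], by simp, by simp⟩
  · rintro x y - - ⟨l1, h1, rfl⟩ ⟨l2, h2, rfl⟩
    refine ⟨l1 ++ l2, ?_, by simp⟩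
    intro q hq
    rcases List.mem_append.mp hq with h | h
    exacts [h1 q h, h2 q h]
  · rintro r x - ⟨l, h, rfl⟩
    refine ⟨l.map fun q => (r * q.1, q.2), ?_, smul_list_pair_sum r l⟩
    rintro q hq
    obtain ⟨q', hq', rfl⟩ := List.mem_map.mp hq
    show r * q'.1 ∈ I
    rw [← smul_eq_mul]
    exact I.smul_mem r (h q' hq')

/-- The value (current module element, product of radical labels) along a path in the
expansion tree determined by an expansion function `f`. -/
noncomputable def pVal (f : M → List (R × M)) (z0 : M) : List ℕ → M × R
  | [] => (z0, 1)
  | i :: p =>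
    if h : i < (f (pVal f z0 p).1).length then
      (((f (pVal f z0 p).1).get ⟨i, h⟩).2,
        (pVal f z0 p).2 * ((f (pVal f z0 p).1).get ⟨i, h⟩).1)
    else (0, 0)

/-- The ring label of the step `i` from the node `p`. -/
noncomputable def pLab (f : M → List (R × M)) (z0 : M) (p : List ℕ) (i : ℕ) : R :=
  if h : i < (f (pVal f z0 p).1).length then ((f (pVal f z0 p).1).get ⟨i, h⟩).1 else 0

lemma pVal_cons_snd (f : M → List (R × M)) (z0 : M) (i : ℕ) (p : List ℕ) :
    (pVal f z0 (i :: p)).2 = (pVal f z0 p).2 * pLab f z0 p i := by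
  rw [pVal, pLab]
  split
  · rfl
  · simp

lemma pLab_mem {I : Ideal R} {f : M → List (R × M)} (hfJ : ∀ m, ∀ q ∈ f m, q.1 ∈ I)
    (z0 : M) (p : List ℕ) (i : ℕ) : pLab f z0 p i ∈ I := by
  rw [pLab]
  split
  · exact hfJ _ _ (List.get_mem _ _)
  · exact I.zero_mem

lemma pVal_claim1 (f : M → List (R × M)) (z0 : M) (L : Submodule R M)
    (hfL : ∀ m : M, m - ((f m).map fun q => q.1 • q.2).sum ∈ L) (n : ℕ) :
    z0 ∈ L ⊔ Submodule.span R
      {x | ∃ p : List ℕ, p.length = n ∧ x = (pVal f z0 p).2 • (pVal f z0 p).1} := by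
  induction n with
  | zero =>
    refine Submodule.mem_sup_right (Submodule.subset_span ⟨[], rfl, ?_⟩)
    simp [pVal]
  | succ n ih =>
    have hstep : Submodule.span R
        {x | ∃ p : List ℕ, p.length = n ∧ x = (pVal f z0 p).2 • (pVal f z0 p).1} ≤
        L ⊔ Submodule.span R
          {x | ∃ p : List ℕ, p.length = n + 1 ∧ x = (pVal f z0 p).2 • (pVal f z0 p).1} := by
      rw [Submodule.span_le]
      rintro x ⟨p, hp, rfl⟩
      set m := (pVal f z0 p).1 with hm
      set c := (pVal f z0 p).2 with hc
      have h2 : ∀ i : Fin (f m).length,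
          (pVal f z0 ((i : ℕ) :: p)).2 • (pVal f z0 ((i : ℕ) :: p)).1
            = c • (((f m).get i).1 • ((f m).get i).2) := by
        intro i
        rw [pVal, dif_pos i.2]
        rw [smul_smul]
      have h3 : (∑ i : Fin (f m).length,
            (pVal f z0 ((i : ℕ) :: p)).2 • (pVal f z0 ((i : ℕ) :: p)).1)
          = c • ((f m).map fun q => q.1 • q.2).sum := by
        rw [list_map_sum_eq_fin ((f m)) (fun q => q.1 • q.2), Finset.smul_sum]
        exact Finset.sum_congr rfl fun i _ => h2 i
      have key : c • m = c • (m - ((f m).map fun q => q.1 • q.2).sum)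
          + ∑ i : Fin (f m).length,
              (pVal f z0 ((i : ℕ) :: p)).2 • (pVal f z0 ((i : ℕ) :: p)).1 := by
        rw [h3, smul_sub]
        abel
      rw [SetLike.mem_coe, key]
      refine Submodule.add_mem _ (Submodule.mem_sup_left (L.smul_mem c (hfL m))) ?_
      refine Submodule.sum_mem _ fun i _ => ?_
      exact Submodule.mem_sup_right (Submodule.subset_span ⟨(i : ℕ) :: p, by simp [hp], rfl⟩)
    have hmono : L ⊔ Submodule.span R
        {x | ∃ p : List ℕ, p.length = n ∧ x = (pVal f z0 p).2 • (pVal f z0 p).1} ≤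
        L ⊔ Submodule.span R
          {x | ∃ p : List ℕ, p.length = n + 1 ∧ x = (pVal f z0 p).2 • (pVal f z0 p).1} :=
      sup_le le_sup_left hstep
    exact hmono ih

/-- Bass's lemma: if the Jacobson radical is left T-nilpotent, then `J(R)·M` is
superfluous in every module `M`. -/
lemma tnil_superfluous (hT : IsLeftTNilpotent (jac R : Set R)) :
    Superfluous R M (idealSMul R M (jac R) ⊤) := by
  classical
  intro L hL
  rw [Submodule.eq_top_iff']
  intro z0
  have hexp : ∀ m : M, ∃ l : List (R × M), (∀ q ∈ l, q.1 ∈ jac R) ∧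
      m - (l.map fun q => q.1 • q.2).sum ∈ L := by
    intro m
    have hm : m ∈ idealSMul R M (jac R) ⊤ ⊔ L := by rw [hL]; trivial
    obtain ⟨y, hy, l', hl', hsum⟩ := Submodule.mem_sup.mp hm
    obtain ⟨lst, hJ, rfl⟩ := mem_idealSMul_elim hy
    refine ⟨lst, hJ, ?_⟩
    rw [← hsum]
    simpa using hl'
  choose f hfJ hfL using hexp
  by_cases hvan : ∃ n, ∀ p : List ℕ, p.length = n → (pVal f z0 p).2 = 0
  · obtain ⟨n, hn⟩ := hvan
    have h1 := pVal_claim1 f z0 L hfL n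
    have h2 : Submodule.span R
        {x | ∃ p : List ℕ, p.length = n ∧ x = (pVal f z0 p).2 • (pVal f z0 p).1} = ⊥ := by
      rw [Submodule.span_eq_bot]
      rintro x ⟨p, hp, rfl⟩
      rw [hn p hp, zero_smul]
    rw [h2, sup_bot_eq] at h1
    exact h1
  · exfalso
    push_neg at hvan
    have gtail : ∀ (i : ℕ) (p : List ℕ),
        (pVal f z0 (i :: p)).2 ≠ 0 → (pVal f z0 p).2 ≠ 0 := by
      intro i p h hc
      exact h (by rw [pVal_cons_snd, hc, zero_mul])
    have gsuffix : ∀ (q p : List ℕ), p <:+ q → (pVal f z0 q).2 ≠ 0 → (pVal f z0 p).2 ≠ 0 := by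
      intro q
      induction q with
      | nil =>
        intro p hp h
        rwa [List.suffix_nil.mp hp]
      | cons i t ih =>
        intro p hp h
        rcases List.suffix_cons_iff.mp hp with rfl | hp'
        · exact h
        · exact ih p hp' (gtail i t h)
    have hcompare : ∀ (q s1 s2 : List ℕ), s1 <:+ q → s2 <:+ q → s1.length ≤ s2.length →
        s1 <:+ s2 := by
      intro q s1 s2 h1 h2 hle
      have hl1 : s1.length ≤ q.length := h1.length_le
      have hl2 : s2.length ≤ q.length := h2.length_le
      have e1 : s1 = q.drop (q.length - s1.length) := List.suffix_iff_eq_drop.mp h1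
      have e2 : s2 = q.drop (q.length - s2.length) := List.suffix_iff_eq_drop.mp h2
      have harith : (q.length - s2.length) + (s2.length - s1.length) = q.length - s1.length := by
        omega
      have e3 : s1 = s2.drop (s2.length - s1.length) := by
        calc s1 = q.drop (q.length - s1.length) := e1
          _ = q.drop ((q.length - s2.length) + (s2.length - s1.length)) := by rw [harith]
          _ = (q.drop (q.length - s2.length)).drop (s2.length - s1.length) :=
              List.drop_drop.symm
          _ = s2.drop (s2.length - s1.length) := by rw [← e2]
      rw [e3]
      exact List.drop_suffix _ _
    set D : List ℕ → Prop := fun p => ∀ n : ℕ, ∃ q : List ℕ,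
      (pVal f z0 q).2 ≠ 0 ∧ p <:+ q ∧ q.length = p.length + n with hD
    have hDgood : ∀ p, D p → (pVal f z0 p).2 ≠ 0 := by
      intro p hp
      obtain ⟨q, hq, hsuf, hlen⟩ := hp 0
      rwa [hsuf.eq_of_length (by omega)]
    have hD0 : D [] := by
      intro n
      obtain ⟨p, hp, hcne⟩ := hvan n
      exact ⟨p, hcne, List.nil_suffix, by simp [hp]⟩
    have hdesc : ∀ (p q : List ℕ) (l : ℕ), p <:+ q → (pVal f z0 q).2 ≠ 0 →
        p.length ≤ l → l ≤ q.length →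
        ∃ q', (pVal f z0 q').2 ≠ 0 ∧ p <:+ q' ∧ q' <:+ q ∧ q'.length = l := by
      intro p q l hsuf hq h1 h2
      refine ⟨q.drop (q.length - l), ?_, ?_, List.drop_suffix _ _, ?_⟩
      · exact gsuffix q _ (List.drop_suffix _ _) hq
      · exact hcompare q p _ hsuf (List.drop_suffix _ _) (by rw [List.length_drop]; omega)
      · rw [List.length_drop]; omega
    have hDstep : ∀ p, D p → ∃ i, D (i :: p) := by
      intro p hp
      by_contra hno
      push_neg at hno
      have hno' : ∀ i : ℕ, ∃ n : ℕ, ∀ q : List ℕ, (pVal f z0 q).2 ≠ 0 → (i :: p) <:+ q →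
          q.length ≠ (i :: p).length + n := by
        intro i
        have h := hno i
        simp only [hD] at h
        push_neg at h
        obtain ⟨n, hn⟩ := h
        exact ⟨n, fun q hq hsuf hlen => (hn q hq hsuf) hlen⟩
      choose nn hnn using hno'
      set B := (f (pVal f z0 p).1).length with hB
      set N := (Finset.range B).sup nn with hN
      obtain ⟨q, hqc, hqsuf, hqlen⟩ := hp (N + 1)
      obtain ⟨q1, h1c, h1suf, h1subq, h1len⟩ :=
        hdesc p q (p.length + 1) hqsuf hqc (by omega) (by omega)
      obtain ⟨i, rfl⟩ : ∃ i, q1 = i :: p := by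
        cases q1 with
        | nil => simp at h1len
        | cons i t =>
          refine ⟨i, ?_⟩
          rcases List.suffix_cons_iff.mp h1suf with h | h
          · exfalso
            have := congrArg List.length h
            simp at this h1len
            omega
          · have ht : p = t := h.eq_of_length (by simp at h1len; omega)
            rw [ht]
      have hiB : i < B := by
        by_contra hge
        apply h1c
        have hnlt : ¬ i < (f (pVal f z0 p).1).length := by rw [← hB]; omega
        rw [pVal, dif_neg hnlt]
      have hNi : nn i ≤ N := Finset.le_sup (Finset.mem_range.mpr hiB)
      obtain ⟨q2, h2c, h2suf, h2subq, h2len⟩ :=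
        hdesc (i :: p) q (p.length + 1 + nn i) h1subq hqc
          (by simp only [List.length_cons]; omega) (by omega)
      exact hnn i q2 h2c h2suf (by simp only [List.length_cons]; omega)
    set nxt : List ℕ → ℕ := fun p => if h : ∃ i, D (i :: p) then h.choose else 0 with hnxt
    set pth : ℕ → List ℕ := fun n => Nat.rec [] (fun _ q => nxt q :: q) n with hpth
    have hpthS : ∀ n, pth (n + 1) = nxt (pth n) :: pth n := fun n => rfl
    have hpathD : ∀ n, D (pth n) := by
      intro n
      induction n with
      | zero => exact hD0
      | succ n ih =>
        rw [hpthS]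
        have hex : ∃ i, D (i :: pth n) := hDstep _ ih
        simp only [hnxt]
        rw [dif_pos hex]
        exact hex.choose_spec
    set b : ℕ → R := fun n => pLab f z0 (pth n) (nxt (pth n)) with hb
    have hbJ : ∀ n, b n ∈ (jac R : Set R) := fun n => pLab_mem hfJ _ _ _
    have hmul : ∀ n, (pVal f z0 (pth (n + 1))).2 = (pVal f z0 (pth n)).2 * b n := by
      intro n
      rw [hpthS]
      exact pVal_cons_snd f z0 _ _
    have hprod : ∀ n, ((List.range (n + 1)).map b).prod = (pVal f z0 (pth (n + 1))).2 := by
      intro n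
      induction n with
      | zero =>
        rw [hmul 0]
        have h1 : (pVal f z0 (pth 0)).2 = 1 := rfl
        rw [h1, one_mul]
        simp [List.range_succ]
      | succ n ih =>
        rw [List.prod_range_succ, ih, ← hmul (n + 1)]
    obtain ⟨n, hn0⟩ := hT b hbJ
    have hz : (pVal f z0 (pth (n + 1))).2 = 0 := by rw [← hprod n]; exact hn0
    exact hDgood _ (hpathD (n + 1)) hz

end TNilAux

/-- In every projective module the superfluous submodules are
exactly those contained in `J(R)P`, iff `J(R)` is left T-nilpotent. -/
theorem statement_4 (R : Type u) [Ring R] :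
    (∀ (P : Type u) [AddCommGroup P] [Module R P], Module.Projective R P →
        ∀ N : Submodule R P, (Superfluous R P N ↔ N ≤ idealSMul R P (jac R) ⊤)) ↔
      IsLeftTNilpotent (jac R : Set R) := by
  constructor
  · -- (i) → T-nilpotence, via the free module `ℕ →₀ R`
    intro H a ha
    have hproj : Module.Projective R (ℕ →₀ R) := inferInstance
    have hsup : Superfluous R (ℕ →₀ R) (idealSMul R (ℕ →₀ R) (jac R) ⊤) :=
      (H (ℕ →₀ R) hproj (idealSMul R (ℕ →₀ R) (jac R) ⊤)).mpr le_rfl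
    set xseq : ℕ → (ℕ →₀ R) := fun n =>
      Finsupp.single n 1 - Finsupp.single (n + 1) (a n) with hxseq
    set L : Submodule R (ℕ →₀ R) := Submodule.span R (Set.range xseq) with hLdef
    have htop : idealSMul R (ℕ →₀ R) (jac R) ⊤ ⊔ L = ⊤ := by
      rw [eq_top_iff]
      intro z _
      have hz : z.sum (fun c r => r • Finsupp.single c 1) = z := by
        have hone : ∀ (cc : ℕ) (rr : R), rr • Finsupp.single cc (1 : R) = Finsupp.single cc rr := by
          intro cc rr
          rw [Finsupp.smul_single, smul_eq_mul, mul_one]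
        simp only [hone]
        exact Finsupp.sum_single z
      rw [← hz]
      apply Submodule.finsuppSum_mem
      intro c _
      refine Submodule.smul_mem _ _ ?_
      have hdecomp : Finsupp.single c (1 : R) = xseq c + Finsupp.single (c + 1) (a c) := by
        rw [hxseq]
        simp
      rw [hdecomp]
      refine Submodule.add_mem _ ?_ ?_
      · exact Submodule.mem_sup_right (Submodule.subset_span (Set.mem_range_self c))
      · refine Submodule.mem_sup_left (Submodule.subset_span ?_)
        exact ⟨a c, ha c, Finsupp.single (c + 1) 1, trivial, by
          rw [Finsupp.smul_single, smul_eq_mul, mul_one]⟩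
    have hLtop : L = ⊤ := hsup L htop
    have h0 : Finsupp.single 0 (1 : R) ∈ Submodule.span R (Set.range xseq) := by
      rw [← hLdef, hLtop]; trivial
    obtain ⟨c, hc⟩ := Finsupp.mem_span_range_iff_exists_finsupp.mp h0
    have key : ∀ k : ℕ, (∑ i ∈ c.support, c i * (xseq i k)) = Finsupp.single 0 (1 : R) k := by
      intro k
      have h := congrArg (fun z : ℕ →₀ R => z k) hc
      rw [← h, Finsupp.sum, Finsupp.finset_sum_apply]
      exact Finset.sum_congr rfl fun i _ => by rw [Finsupp.smul_apply, smul_eq_mul]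
    have hxval : ∀ i k : ℕ, xseq i k
        = (if i = k then (1 : R) else 0) - (if i + 1 = k then a i else 0) := by
      intro i k
      rw [hxseq]
      simp only
      rw [Finsupp.sub_apply, Finsupp.single_apply, Finsupp.single_apply]
    have hc0 : c 0 = 1 := by
      have h := key 0
      have h1 : (∑ i ∈ c.support, c i * (xseq i 0))
          = ∑ i ∈ c.support, (if i = 0 then c i else 0) := by
        refine Finset.sum_congr rfl fun i _ => ?_
        rw [hxval]
        simp [Nat.succ_ne_zero]
      rw [h1, Finset.sum_ite_eq' c.support 0 (fun i => c i)] at h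
      have h2 : (if (0 : ℕ) ∈ c.support then c 0 else 0) = c 0 := by
        split
        · rfl
        · exact (Finsupp.notMem_support_iff.mp ‹_›).symm
      rw [h2] at h
      simpa using h
    have hcs : ∀ j : ℕ, c (j + 1) = c j * a j := by
      intro j
      have h := key (j + 1)
      have hsplit : (∑ i ∈ c.support, c i * (xseq i (j + 1)))
          = (∑ i ∈ c.support, (if i = j + 1 then c i else 0))
            - (∑ i ∈ c.support, (if i = j then c i * a i else 0)) := by
        rw [← Finset.sum_sub_distrib]
        refine Finset.sum_congr rfl fun i _ => ?_
        rw [hxval, mul_sub]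
        congr 1
        · rw [mul_ite, mul_one, mul_zero]
        · by_cases hij : i = j
          · simp [hij]
          · have hij' : ¬(i + 1 = j + 1) := fun hh => hij (by omega)
            simp [hij, hij']
      rw [hsplit, Finset.sum_ite_eq' c.support (j + 1) (fun i => c i),
        Finset.sum_ite_eq' c.support j (fun i => c i * a i)] at h
      have hr0 : Finsupp.single 0 (1 : R) (j + 1) = 0 := by
        rw [Finsupp.single_apply]
        simp
      rw [hr0] at h
      have h1 : (if (j + 1) ∈ c.support then c (j + 1) else 0) = c (j + 1) := by
        split
        · rfl
        · exact (Finsupp.notMem_support_iff.mp ‹_›).symm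
      have h2 : (if j ∈ c.support then c j * a j else 0) = c j * a j := by
        split
        · rfl
        · rw [Finsupp.notMem_support_iff.mp ‹_›, zero_mul]
      rw [h1, h2] at h
      exact sub_eq_zero.mp h
    have hcn : ∀ n, c n = ((List.range n).map a).prod := by
      intro n
      induction n with
      | zero => simpa using hc0
      | succ n ih => rw [List.prod_range_succ, ← ih, hcs n]
    refine ⟨c.support.sup id, ?_⟩
    rw [← hcn]
    refine Finsupp.notMem_support_iff.mp fun hmem => ?_
    have hle := Finset.le_sup (f := id) hmem
    simp only [id] at hle
    omega
  · -- T-nilpotence → (i)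
    intro hT P _ _ hproj N
    constructor
    · -- superfluous submodules of a projective lie in J(R)P
      intro hsupN x hx
      by_contra hxJ
      obtain ⟨s, hs⟩ := Module.projective_def.mp hproj
      have hcoord : ∃ cid : P, (s x) cid ∉ jac R := by
        by_contra hall
        push_neg at hall
        apply hxJ
        have hx2 : x = (s x).sum fun i r => r • (id i : P) := by
          conv_lhs => rw [← hs x]
          rw [Finsupp.linearCombination_apply]
        rw [hx2]
        apply Submodule.finsuppSum_mem
        intro cid _
        exact Submodule.subset_span ⟨(s x) cid, hall cid, cid, trivial, rfl⟩
      obtain ⟨cid, hcid⟩ := hcoord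
      have hmax : ∃ mI : Ideal R, mI.IsMaximal ∧ (s x) cid ∉ mI := by
        by_contra hm
        push_neg at hm
        apply hcid
        rw [jac, Ideal.jacobson]
        rw [Submodule.mem_sInf]
        intro I hI
        exact hm I hI.2
      obtain ⟨mI, hmImax, hmem⟩ := hmax
      set φ : P →ₗ[R] R := (Finsupp.lapply cid).comp s with hφ
      have hφx : φ x ∉ mI := hmem
      have hKtop : N ⊔ Submodule.comap φ mI = ⊤ := by
        rw [eq_top_iff]
        intro p _
        have h1 : (1 : R) ∈ mI ⊔ Submodule.span R {φ x} := by
          have hlt : mI < mI ⊔ Submodule.span R {φ x} :=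
            left_lt_sup.mpr fun hle => hφx (hle (Submodule.mem_span_singleton_self _))
          have hco := hmImax.out.2 _ hlt
          rw [hco]
          trivial
        obtain ⟨u, hu, v, hv, huv⟩ := Submodule.mem_sup.mp h1
        obtain ⟨r, hr⟩ := Submodule.mem_span_singleton.mp hv
        have hmem2 : p - (φ p * r) • x ∈ Submodule.comap φ mI := by
          refine Submodule.mem_comap.mpr ?_
          rw [map_sub, map_smul, smul_eq_mul]
          have hfv : φ p - φ p * r * φ x = φ p * u := by
            have hv1 : u = 1 - v := eq_sub_of_add_eq huv
            rw [hv1, mul_sub, mul_one, ← hr, smul_eq_mul, mul_assoc]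
          rw [hfv, ← smul_eq_mul]
          exact mI.smul_mem _ hu
        have hp : p = (φ p * r) • x + (p - (φ p * r) • x) := by abel
        rw [hp]
        exact Submodule.add_mem _ (Submodule.mem_sup_left (N.smul_mem _ hx))
          (Submodule.mem_sup_right hmem2)
      have hKeq := hsupN _ hKtop
      have hxK : x ∈ Submodule.comap φ mI := by rw [hKeq]; trivial
      exact hφx hxK
    · -- submodules of J(R)P are superfluous (Bass's lemma)
      intro hNle L hL
      have hle : N ⊔ L ≤ idealSMul R P (jac R) ⊤ ⊔ L := sup_le_sup_right hNle L
      rw [hL] at hle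
      exact tnil_superfluous hT L (top_le_iff.mp hle)
end

section
/- A ring R is left noetherian and left perfect if and only if R is left artinian. -/
universe u

open Function CategoryTheory

/-! ### Auxiliary development for statement 5 -/

section Statement5Aux

variable {R : Type u} [Ring R]

lemma jac_mul_mem' {a r : R} (ha : a ∈ Ideal.jacobson (⊥ : Ideal R)) :
    a * r ∈ Ideal.jacobson (⊥ : Ideal R) :=
  (Ideal.jacobson (⊥ : Ideal R)).mul_mem_right r ha

lemma eq_zero_of_jac_smul {a x : R} (ha : a ∈ Ideal.jacobson (⊥ : Ideal R)) (h : a * x = x) :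
    x = 0 := by
  obtain ⟨z, hz⟩ := Ideal.mem_jacobson_iff.mp ha (-1)
  rw [Ideal.mem_bot, sub_eq_zero] at hz
  have hz' : z * (1 - a) = 1 := by rw [mul_sub, mul_one, ← hz]; noncomm_ring
  have hax : x - a * x = 0 := by rw [h, sub_self]
  calc x = z * (1 - a) * x := by rw [hz', one_mul]
  _ = z * (x - a * x) := by noncomm_ring
  _ = 0 := by rw [hax, mul_zero]

/-- Iterated smul powers of an ideal acting on a module. -/
def fpow (J : Ideal R) (M : Type u) [AddCommGroup M] [Module R M] : ℕ → Submodule R M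
  | 0 => ⊤
  | n + 1 => J • fpow J M n

variable (J : Ideal R) (M : Type u) [AddCommGroup M] [Module R M]

lemma fpow_succ_le (n : ℕ) : fpow J M (n+1) ≤ fpow J M n :=
  Submodule.smul_le.mpr fun a _ x hx => Submodule.smul_mem _ a hx

lemma fpow_antitone : Antitone (fpow J M) :=
  antitone_nat_of_succ_le (fpow_succ_le J M)

lemma prod_mem_fpow (l : List R) (hl : ∀ x ∈ l, x ∈ J) :
    l.prod ∈ fpow J R l.length := by
  induction l with
  | nil => exact Submodule.mem_top
  | cons a l ih =>
      simpa [fpow] using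
        Submodule.smul_mem_smul (hl a (by simp)) (ih (fun x hx => hl x (by simp [hx])))


lemma semisimple_of_killed (J : Ideal R) [IsSemisimpleModule R (R ⧸ J)]
    (M : Type u) [AddCommGroup M] [Module R M]
    (hM : ∀ a ∈ J, ∀ x : M, a • x = 0) : IsSemisimpleModule R M := by
  apply isSemisimpleModule_of_isSemisimpleModule_submodule'
    (p := fun x : M => Submodule.span R {x})
  · intro x
    -- span {x} = range (toSpanSingleton x) ≃ R ⧸ ker, a quotient of R ⧸ J
    set f := LinearMap.toSpanSingleton R M x with hf
    have hker : J ≤ LinearMap.ker f := fun a ha => by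
      simp [hf, LinearMap.toSpanSingleton_apply, hM a ha x]
    have e1 : (R ⧸ LinearMap.ker f) ≃ₗ[R] LinearMap.range f := f.quotKerEquivRange
    have e2 : ((R ⧸ J) ⧸ (LinearMap.ker f).map J.mkQ) ≃ₗ[R] R ⧸ LinearMap.ker f :=
      Submodule.quotientQuotientEquivQuotient J (LinearMap.ker f) hker
    have h3 : IsSemisimpleModule R ((R ⧸ J) ⧸ (LinearMap.ker f).map J.mkQ) :=
      inferInstance
    have h4 : IsSemisimpleModule R (LinearMap.range f) :=
      IsSemisimpleModule.congr (e1.symm.trans e2.symm)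
    have : LinearMap.range f = Submodule.span R {x} :=
      (LinearMap.span_singleton_eq_range R M x).symm
    exact this ▸ h4
  · rw [eq_top_iff]
    exact fun y _ => Submodule.mem_iSup_of_mem y (Submodule.mem_span_singleton_self y)

lemma hopkins_core (J : Ideal R) [IsSemisimpleModule R (R ⧸ J)] :
    ∀ (n : ℕ) (M : Type u) [AddCommGroup M] [Module R M], fpow J M n = ⊥ →
      (IsNoetherian R M ↔ IsArtinian R M) := by
  intro n
  induction n with
  | zero =>
      intro M _ _ h
      have : Subsingleton M := by
        rw [← Submodule.subsingleton_iff R]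
        exact subsingleton_of_bot_eq_top h.symm
      constructor <;> intro <;> infer_instance
  | succ n ih =>
      intro M _ _ h
      set N : Submodule R M := J • ⊤ with hN
      -- quotient killed by J
      have hq : ∀ a ∈ J, ∀ x : M ⧸ N, a • x = 0 := by
        intro a ha x
        obtain ⟨y, rfl⟩ := Submodule.Quotient.mk_surjective N x
        rw [← Submodule.Quotient.mk_smul, Submodule.Quotient.mk_eq_zero]
        exact Submodule.smul_mem_smul ha Submodule.mem_top
      have hss : IsSemisimpleModule R (M ⧸ N) := semisimple_of_killed J _ hq
      -- N satisfies fpow J N n = ⊥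
      have hsub : fpow J (↥N) n = ⊥ := by
        have hmap : ∀ k, Submodule.map N.subtype (fpow J (↥N) k) = fpow J M (k+1) := by
          intro k
          induction k with
          | zero =>
              show Submodule.map N.subtype ⊤ = J • ⊤
              rw [Submodule.map_top, Submodule.range_subtype]
          | succ k ihk =>
              show Submodule.map N.subtype (J • fpow J (↥N) k) = J • fpow J M (k+1)
              rw [Submodule.map_smul'', ihk]
        have := hmap n
        rw [h] at this
        rw [← Submodule.map_bot N.subtype] at this
        exact Submodule.map_injective_of_injective (Submodule.injective_subtype N) this
      constructor
      · intro hnoe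
        have h1 : IsNoetherian R (↥N) := inferInstance
        have h2 : IsArtinian R (↥N) := (ih (↥N) hsub).mp h1
        have h3 : IsNoetherian R (M ⧸ N) := inferInstance
        have h4 : IsArtinian R (M ⧸ N) := (IsSemisimpleModule.finite_tfae.out 1 2).mp h3
        exact (isArtinian_iff_submodule_quotient N).mpr ⟨h2, h4⟩
      · intro hart
        have h1 : IsArtinian R (↥N) := inferInstance
        have h2 : IsNoetherian R (↥N) := (ih (↥N) hsub).mpr h1
        have h3 : IsArtinian R (M ⧸ N) := inferInstance
        have h4 : IsNoetherian R (M ⧸ N) := (IsSemisimpleModule.finite_tfae.out 2 1).mp h3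
        exact (isNoetherian_iff_submodule_quotient N).mpr ⟨h2, h4⟩



lemma pi_semisimple {ι : Type u} [Fintype ι] (M : ι → Type u)
    [∀ i, AddCommGroup (M i)] [∀ i, Module R (M i)]
    [∀ i, IsSemisimpleModule R (M i)] : IsSemisimpleModule R (∀ i, M i) := by
  classical
  apply isSemisimpleModule_of_isSemisimpleModule_submodule'
    (p := fun i => LinearMap.range (LinearMap.single R M i))
  · intro i
    exact IsSemisimpleModule.congr
      (LinearEquiv.ofInjective (LinearMap.single R M i) (Pi.single_injective i)).symm
  · rw [eq_top_iff]
    intro x _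
    have : x = ∑ i, LinearMap.single R M i (x i) := by
      ext j; simp [LinearMap.single_apply, Finset.sum_apply, Pi.single_apply]
    rw [this]
    exact Submodule.sum_mem _ fun i _ =>
      Submodule.mem_iSup_of_mem i (LinearMap.mem_range_self _ _)

lemma artinian_semilocal [IsArtinianRing R] :
    IsSemisimpleModule R (R ⧸ Ideal.jacobson (⊥ : Ideal R)) := by
  classical
  set J := Ideal.jacobson (⊥ : Ideal R) with hJ
  -- every maximal ideal contains J
  have hJle : ∀ m : Ideal R, m.IsMaximal → J ≤ m := fun m hm =>
    sInf_le ⟨bot_le, hm⟩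
  -- key: an element in all "maximal submodules" is zero
  have key : ∀ x : R ⧸ J, (∀ m : Ideal R, m.IsMaximal → x ∈ Submodule.map J.mkQ m) → x = 0 := by
    intro x hx
    obtain ⟨r, rfl⟩ := Submodule.Quotient.mk_surjective J x
    rw [Submodule.Quotient.mk_eq_zero]
    have : r ∈ J := by
      apply Submodule.mem_sInf.mpr
      rintro m ⟨-, hm⟩
      have h1 : (J.mkQ r : R ⧸ J) ∈ Submodule.map J.mkQ m := hx m hm
      have h2 : r ∈ Submodule.comap J.mkQ (Submodule.map J.mkQ m) := h1
      rw [Submodule.comap_map_mkQ, sup_eq_right.mpr (hJle m hm)] at h2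
      exact h2
    exact this
  -- find a finite inf of maximal submodules equal to ⊥
  set S : Set (Submodule R (R ⧸ J)) :=
    {N | ∃ s : Finset (Ideal R), (∀ m ∈ s, Ideal.IsMaximal m) ∧
      N = s.inf fun m => Submodule.map J.mkQ m} with hS
  obtain ⟨N₀, hN₀S, hmin⟩ := IsArtinian.set_has_minimal S ⟨⊤, ∅, by simp, by simp⟩
  have hle : ∀ m : Ideal R, m.IsMaximal → N₀ ≤ Submodule.map J.mkQ m := by
    intro m hm
    obtain ⟨s, hs, rfl⟩ := hN₀S
    by_contra hcon
    have hmem : (s.inf fun m => Submodule.map J.mkQ m) ⊓ Submodule.map J.mkQ m ∈ S := by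
      refine ⟨insert m s, ?_, ?_⟩
      · intro m' hm'; rcases Finset.mem_insert.mp hm' with rfl | h; exacts [hm, hs m' h]
      · rw [Finset.inf_insert, inf_comm]
    exact hmin _ hmem (lt_of_le_of_ne inf_le_left
      (fun he => hcon (he ▸ inf_le_right)))
  have hbot : N₀ = ⊥ := by
    rw [eq_bot_iff]
    intro x hx
    exact (Submodule.mem_bot R).mpr (key x fun m hm => hle m hm hx)
  obtain ⟨s, hs, hinf⟩ := hN₀S
  rw [hbot] at hinf
  -- embed into the product of simple quotients
  have hcoatom : ∀ m ∈ s, IsCoatom (Submodule.map J.mkQ m) := by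
    intro m hm
    have hmx := hs m hm
    have hcm : Submodule.comap J.mkQ (Submodule.map J.mkQ m) = m := by
      rw [Submodule.comap_map_mkQ, sup_eq_right.mpr (hJle m hmx)]
    constructor
    · intro htop
      rw [htop, Submodule.comap_top] at hcm
      exact hmx.ne_top hcm.symm
    · intro b hb
      have h1 : m ≤ Submodule.comap J.mkQ b := hcm ▸ Submodule.comap_mono hb.le
      have h2 : m ≠ Submodule.comap J.mkQ b := by
        intro he
        have : b = Submodule.map J.mkQ m := by
          rw [he, Submodule.map_comap_eq_of_surjective (f := J.mkQ)
            (Submodule.Quotient.mk_surjective J)]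
        exact hb.ne' this
      have h3 : Submodule.comap J.mkQ b = ⊤ :=
        (Ideal.isMaximal_def.mp hmx).2 _ (lt_of_le_of_ne h1 h2)
      rw [← Submodule.map_comap_eq_of_surjective (f := J.mkQ)
        (Submodule.Quotient.mk_surjective J) b, h3, Submodule.map_top, Submodule.range_mkQ]
  have hsimple : ∀ i : {m : Ideal R // m ∈ s},
      IsSimpleModule R ((R ⧸ J) ⧸ Submodule.map J.mkQ i.1) := fun i =>
    isSimpleModule_iff_isCoatom.mpr (hcoatom i.1 i.2)
  set f : (R ⧸ J) →ₗ[R] ∀ i : {m : Ideal R // m ∈ s}, (R ⧸ J) ⧸ Submodule.map J.mkQ i.1 :=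
    LinearMap.pi fun i => (Submodule.map J.mkQ i.1).mkQ with hf
  have hker : LinearMap.ker f = ⊥ := by
    rw [hf, LinearMap.ker_pi]
    simp only [Submodule.ker_mkQ]
    rw [iInf_subtype]
    rw [show (⨅ (m : Ideal R) (h : m ∈ s), Submodule.map J.mkQ m)
        = s.inf fun m => Submodule.map J.mkQ m from (Finset.inf_eq_iInf _ _).symm, ← hinf]
  have hinj : Function.Injective f := LinearMap.ker_eq_bot.mp hker
  have : IsSemisimpleModule R (∀ i : {m : Ideal R // m ∈ s},
      (R ⧸ J) ⧸ Submodule.map J.mkQ i.1) := by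
    have := hsimple
    exact pi_semisimple _
  exact IsSemisimpleModule.of_injective f hinj

lemma smul_smul_assoc (I K : Ideal R) (M : Type u) [AddCommGroup M] [Module R M]
    (N : Submodule R M) : (I • K : Ideal R) • N = I • (K • N) := by
  apply le_antisymm
  · apply Submodule.smul_le.mpr
    intro a ha n hn
    refine Submodule.smul_induction_on ha (fun i hi k hk => ?_) (fun a b h1 h2 => ?_)
    · have : (i • k) • n = i • (k • n) := by
        rw [smul_eq_mul, mul_smul]
      rw [this]
      exact Submodule.smul_mem_smul hi (Submodule.smul_mem_smul hk hn)
    · rw [add_smul]; exact Submodule.add_mem _ h1 h2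
  · apply Submodule.smul_le.mpr
    intro i hi y hy
    refine Submodule.smul_induction_on hy (fun k hk n hn => ?_) (fun a b h1 h2 => ?_)
    · rw [← mul_smul, ← smul_eq_mul]
      exact Submodule.smul_mem_smul (Submodule.smul_mem_smul hi hk) hn
    · rw [smul_add]; exact Submodule.add_mem _ h1 h2

lemma artinian_fpow_bot [IsArtinianRing R] :
    ∃ n, fpow (Ideal.jacobson (⊥ : Ideal R)) R n = ⊥ := by
  set J := Ideal.jacobson (⊥ : Ideal R) with hJdef
  obtain ⟨n, hn⟩ := IsArtinian.monotone_stabilizes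
    (⟨fun k => OrderDual.toDual (fpow J R k),
      fun a b hab => (fpow_antitone J R hab : _)⟩ : ℕ →o (Submodule R R)ᵒᵈ)
  set N := fpow J R (n+1) with hNdef
  have hstab : ∀ m, n ≤ m → fpow J R m = N := fun m hm =>
    (congrArg OrderDual.ofDual ((hn m hm).symm.trans (hn (n+1) (Nat.le_succ n))) : _)
  have hJN : (J • N : Ideal R) = N := hstab (n+2) (by omega)
  -- fpow k • N = N for all k
  have hk : ∀ k, fpow J R k • N = N := by
    intro k
    induction k with
    | zero =>
        show (⊤ : Ideal R) • N = N
        apply le_antisymm (Submodule.smul_le.mpr fun a _ x hx => Submodule.smul_mem _ a hx)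
        intro x hx
        simpa using Submodule.smul_mem_smul (Submodule.mem_top (x := (1:R))) hx
    | succ k ihk =>
        show (J • fpow J R k : Ideal R) • N = N
        rw [smul_smul_assoc, ihk]
        exact hJN
  by_cases hN : N = ⊥
  · exact ⟨n+1, hN⟩
  exfalso
  have hNN : (N • N : Ideal R) = N := hk (n+1)
  have hNleJ : N ≤ J := by
    rw [hNdef]
    exact Submodule.smul_le.mpr fun a ha y _ => jac_mul_mem' ha
  set S : Set (Submodule R R) := {I | (N • I : Submodule R R) ≠ ⊥} with hS
  have hNS : N ∈ S := by rw [hS, Set.mem_setOf_eq, hNN]; exact hN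
  obtain ⟨I₀, hI₀, hmin⟩ := IsArtinian.set_has_minimal S ⟨N, hNS⟩
  have hx : ∃ x ∈ I₀, (N • Submodule.span R {x} : Submodule R R) ≠ ⊥ := by
    by_contra hcon
    push_neg at hcon
    apply hI₀
    rw [eq_bot_iff]
    apply Submodule.smul_le.mpr
    intro a ha y hy
    have h1 : a • y ∈ (N • Submodule.span R {y} : Submodule R R) :=
      Submodule.smul_mem_smul ha (Submodule.mem_span_singleton_self y)
    rw [hcon y hy] at h1
    exact h1
  obtain ⟨x, hxI, hxne⟩ := hx
  have hspan_le : Submodule.span R {x} ≤ I₀ := by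
    rw [Submodule.span_le, Set.singleton_subset_iff]; exact hxI
  have hJspan_le : ∀ K : Ideal R, (K • Submodule.span R {x} : Submodule R R)
      ≤ Submodule.span R {x} := fun K =>
    Submodule.smul_le.mpr fun a _ y hy => by
      obtain ⟨r, rfl⟩ := Submodule.mem_span_singleton.mp hy
      rw [← mul_smul]
      exact Submodule.smul_mem _ _ (Submodule.mem_span_singleton_self x)
  have hNxS : (N • Submodule.span R {x} : Submodule R R) ∈ S := by
    rw [hS, Set.mem_setOf_eq, ← smul_smul_assoc, hNN]
    exact hxne
  have hNx_le : (N • Submodule.span R {x} : Submodule R R) ≤ I₀ :=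
    (hJspan_le N).trans hspan_le
  have hNx_eq : (N • Submodule.span R {x} : Submodule R R) = I₀ :=
    hNx_le.lt_or_eq.resolve_left (hmin _ hNxS)
  have hspan_eq : Submodule.span R {x} = I₀ :=
    hspan_le.lt_or_eq.resolve_left (hmin _ hxne)
  have hEq : Submodule.span R {x} = (N • Submodule.span R {x} : Submodule R R) :=
    hspan_eq.trans hNx_eq.symm
  have hmemJ : x ∈ (J • Submodule.span R {x} : Submodule R R) :=
    Submodule.smul_mono_left hNleJ
      (hEq ▸ Submodule.mem_span_singleton_self x)
  have hmap : (J • Submodule.span R {x} : Submodule R R) ≤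
      Submodule.map (LinearMap.toSpanSingleton R R x) J :=
    Submodule.smul_le.mpr fun a ha y hy => by
      obtain ⟨r, rfl⟩ := Submodule.mem_span_singleton.mp hy
      rw [← mul_smul]
      exact ⟨a * r, jac_mul_mem' ha, rfl⟩
  obtain ⟨a, haJ, hax⟩ := hmap hmemJ
  have hx0 : x = 0 := eq_zero_of_jac_smul haJ (by simpa using hax)
  apply hxne
  rw [hx0, Submodule.span_zero_singleton, Submodule.smul_bot]

lemma fpow_le_words (s : Finset R) (hs : Ideal.span ↑s = Ideal.jacobson (⊥ : Ideal R)) :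
    ∀ n : ℕ, fpow (Ideal.jacobson (⊥ : Ideal R)) R n ≤
      ⨆ w : {l : List R // (∀ x ∈ l, x ∈ (s : Set R)) ∧ l.length = n},
        Ideal.span {(w : List R).prod} := by
  set J := Ideal.jacobson (⊥ : Ideal R) with hJ
  intro n
  induction n with
  | zero =>
      intro y _
      apply Submodule.mem_iSup_of_mem (⟨[], by simp⟩ :
        {l : List R // (∀ x ∈ l, x ∈ (s : Set R)) ∧ l.length = 0})
      have : y • (1:R) ∈ Ideal.span {(([] : List R)).prod} := by
        exact Submodule.smul_mem _ y (Submodule.mem_span_singleton_self _)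
      simpa using this
  | succ n ih =>
      show (J • fpow J R n : Submodule R R) ≤ _
      calc (J • fpow J R n : Submodule R R)
          ≤ J • ⨆ w : {l : List R // (∀ x ∈ l, x ∈ (s : Set R)) ∧ l.length = n},
              Ideal.span {(w : List R).prod} := smul_mono_right J ih
        _ = ⨆ w : {l : List R // (∀ x ∈ l, x ∈ (s : Set R)) ∧ l.length = n},
              (J • Ideal.span {(w : List R).prod} : Submodule R R) := Submodule.smul_iSup
        _ ≤ _ := by
            apply iSup_le
            rintro ⟨w, hw1, hw2⟩
            have h1 : (J • Ideal.span {w.prod} : Submodule R R) ≤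
                Submodule.map (LinearMap.toSpanSingleton R R w.prod) J := by
              apply Submodule.smul_le.mpr
              intro a ha y hy
              obtain ⟨r, rfl⟩ := Submodule.mem_span_singleton.mp hy
              rw [← mul_smul]
              exact ⟨a * r, jac_mul_mem' ha, rfl⟩
            refine h1.trans ?_
            rw [← hs]
            have h2 : Submodule.map (LinearMap.toSpanSingleton R R w.prod) (Ideal.span ↑s)
                = Ideal.span ((LinearMap.toSpanSingleton R R w.prod) '' ↑s) :=
              Submodule.map_span _ _
            rw [h2, Ideal.span_le]
            rintro - ⟨g, hg, rfl⟩
            have : (LinearMap.toSpanSingleton R R w.prod) g = ((g :: w).prod) := by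
              simp [LinearMap.toSpanSingleton_apply, List.prod_cons, smul_eq_mul]
            rw [this]
            refine le_iSup (fun w' : {l : List R // (∀ x ∈ l, x ∈ (s : Set R)) ∧
                l.length = n+1} => Ideal.span {(w' : List R).prod})
              ⟨g :: w, ?_, by simp [hw2]⟩ ?_
            · intro x hx
              rcases List.mem_cons.mp hx with rfl | h
              exacts [hg, hw1 x h]
            · exact Submodule.mem_span_singleton_self _

lemma tnilpotent_noetherian_fpow_bot [IsNoetherianRing R]
    (hT : IsLeftTNilpotent ((Ideal.jacobson (⊥ : Ideal R)) : Set R)) :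
    ∃ n, fpow (Ideal.jacobson (⊥ : Ideal R)) R n = ⊥ := by
  classical
  set J := Ideal.jacobson (⊥ : Ideal R) with hJ
  obtain ⟨s, hs⟩ : ∃ s : Finset R, Ideal.span ↑s = J :=
    (IsNoetherian.noetherian J)
  by_contra hcon
  push_neg at hcon
  -- Good words can be extended to nonzero products of any length
  set Good : List R → Prop := fun w =>
    ∀ m : ℕ, ∃ v : List R, (∀ x ∈ v, x ∈ (s : Set R)) ∧ v.length = m ∧
      (w ++ v).prod ≠ 0 with hGood
  have hnil : Good [] := by
    intro m
    by_contra h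
    push_neg at h
    apply hcon m
    rw [eq_bot_iff]
    refine (fpow_le_words s hs m).trans ?_
    apply iSup_le
    rintro ⟨v, hv1, hv2⟩
    have hv0 : v.prod = 0 := by simpa using h v hv1 hv2
    exact le_of_eq (by simp [hv0])
  -- every good word extends to a good word
  have hstep : ∀ w : List R, Good w → ∃ g, g ∈ (s : Set R) ∧ Good (w ++ [g]) := by
    intro w hw
    by_contra h
    push_neg at h
    -- for each g ∈ s there is a length m g beyond which all extensions die
    have h' : ∀ g ∈ (s : Set R), ∃ m : ℕ, ∀ v : List R, (∀ x ∈ v, x ∈ (s : Set R)) →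
        v.length = m → ((w ++ [g]) ++ v).prod = 0 := by
      intro g hg
      obtain ⟨m, hm⟩ := not_forall.mp (fun hh => (h g hg) hh)
      refine ⟨m, fun v hv1 hv2 => ?_⟩
      by_contra hv3
      exact hm ⟨v, hv1, hv2, hv3⟩
    choose! mg hmg using h'
    set Mx := s.sup mg with hMx
    obtain ⟨v, hv1, hv2, hv3⟩ := hw (Mx + 1)
    match v, hv2 with
    | g :: v', hv2 =>
      have hg : g ∈ (s : Set R) := hv1 g (by simp)
      have hlen : mg g ≤ v'.length := by
        have h1 : v'.length = Mx := by simpa using hv2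
        rw [h1]
        exact Finset.le_sup hg
      have hsplit : w ++ g :: v' = ((w ++ [g]) ++ v'.take (mg g)) ++ v'.drop (mg g) := by
        simp [List.take_append_drop]
      apply hv3
      rw [hsplit, List.prod_append, hmg g hg (v'.take (mg g))
        (fun x hx => hv1 x (by simp [List.mem_cons]; right; exact List.mem_of_mem_take hx))
        (by simp [List.length_take]; omega), zero_mul]
  -- build the infinite sequence by recursion
  let T := {l : List R // (∀ x ∈ l, x ∈ (s : Set R)) ∧ Good l}
  let stepf : T → T := fun l =>
    ⟨l.1 ++ [Classical.choose (hstep l.1 l.2.2)],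
      by
        constructor
        · intro x hx
          rcases List.mem_append.mp hx with h1 | h2
          · exact l.2.1 x h1
          · rw [List.mem_singleton.mp h2]
            exact (Classical.choose_spec (hstep l.1 l.2.2)).1
        · exact (Classical.choose_spec (hstep l.1 l.2.2)).2⟩
  let W : ℕ → T := fun n => Nat.rec ⟨[], by simp, hnil⟩ (fun _ acc => stepf acc) n
  have hW : ∀ n, W (n+1) = stepf (W n) := fun n => rfl
  let a : ℕ → R := fun n => Classical.choose (hstep (W n).1 (W n).2.2)
  have hlist : ∀ n, (List.range n).map a = (W n).1 := by
    intro n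
    induction n with
    | zero => rfl
    | succ n ihn =>
        rw [List.range_succ, List.map_append, ihn]
        rfl
  have ha : ∀ i, a i ∈ (J : Set R) := by
    intro i
    have h1 : a i ∈ (s : Set R) := (Classical.choose_spec (hstep (W i).1 (W i).2.2)).1
    rw [← hs]
    exact Ideal.subset_span h1
  obtain ⟨n, hprod⟩ := hT a ha
  have hne : ((List.range (n+1)).map a).prod ≠ 0 := by
    rw [hlist (n+1)]
    obtain ⟨v, _, hv2, hv3⟩ := (W (n+1)).2.2 0
    rw [List.length_eq_zero_iff.mp hv2, List.append_nil] at hv3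
    exact hv3
  exact hne hprod

end Statement5Aux

/-- A ring is left noetherian and left perfect iff it is left artinian. -/
theorem statement_5 (R : Type u) [Ring R] :
    (IsNoetherianRing R ∧ IsLeftPerfectRing R) ↔ IsArtinianRing R := by
  constructor
  · rintro ⟨hN, hSL, hT⟩
    have hss : IsSemisimpleModule R (R ⧸ Ideal.jacobson (⊥ : Ideal R)) := hSL
    have hT' : IsLeftTNilpotent ((Ideal.jacobson (⊥ : Ideal R) : Ideal R) : Set R) := hT
    obtain ⟨n, hn⟩ := tnilpotent_noetherian_fpow_bot hT'
    exact (hopkins_core _ n R hn).mp hN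
  · intro hA
    have hss : IsSemisimpleModule R (R ⧸ Ideal.jacobson (⊥ : Ideal R)) := artinian_semilocal
    obtain ⟨n, hn⟩ := artinian_fpow_bot (R := R)
    refine ⟨(hopkins_core _ n R hn).mpr hA, hss, ?_⟩
    intro a ha
    refine ⟨n, ?_⟩
    have h1 : ((List.range (n+1)).map a).prod ∈
        fpow (Ideal.jacobson (⊥ : Ideal R)) R ((List.range (n+1)).map a).length :=
      prod_mem_fpow _ _ (fun x hx => by
        obtain ⟨i, -, rfl⟩ := List.mem_map.mp hx
        exact ha i)
    rw [show ((List.range (n+1)).map a).length = n + 1 by simp] at h1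
    have h2 := (fpow_succ_le (Ideal.jacobson (⊥ : Ideal R)) R n).trans_eq hn h1
    simpa using h2
end
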